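/- arXiv:2103.04168 — 5 statements merged into one kernel-verified Lean document; each statement's English description precedes it below -/
import Mathlib

section
/- Let $f_1, f_2 : \mathbb{R}^4 \to \mathbb{R}$ be continuous with $|f_i(x)| \le C\langle x\rangle^{-2}$, let $v_1 \ne v_2 \in \mathbb{R}^4$, and let $0 < \alpha_1 \le \alpha_2$ with $\alpha_1 + \alpha_2 > 2$ and $\alpha_2 > 2$. Then there exist $T_0, C' > 0$ such that for all $t \ge T_0$, $\int_{\mathbb{R}^4} |f_1(x - v_1 t)|^{\alpha_1} |f_2(x - v_2 t)|^{\alpha_2} \, dx \le C' t^{-2\alpha_1}$. -/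
noncomputable section

open MeasureTheory

abbrev E4 := EuclideanSpace ℝ (Fin 4)

lemma jb_integrable {r : ℝ} (hr : 4 < r) :
    Integrable (fun y : E4 => Real.sqrt (1 + ‖y‖ ^ 2) ^ (-r)) := by
  have h4 : (Module.finrank ℝ E4 : ℝ) < r := by
    simpa [finrank_euclideanSpace] using hr
  refine (integrable_rpow_neg_one_add_norm_sq (E := E4) (μ := volume) h4).congr
    (Filter.Eventually.of_forall fun y => ?_)
  have hsq : (0:ℝ) ≤ 1 + ‖y‖ ^ 2 := by positivity
  show (1 + ‖y‖ ^ 2) ^ (-r / 2) = Real.sqrt (1 + ‖y‖ ^ 2) ^ (-r)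
  rw [Real.sqrt_eq_rpow, ← Real.rpow_mul hsq]
  congr 1
  ring

lemma key_pointwise {P Q M p q : ℝ} (hP : 1 ≤ P) (hQ : 1 ≤ Q) (hM : 0 < M)
    (hp : 0 < p) (hpq : p ≤ q) (hmax : M ≤ P ∨ M ≤ Q) :
    P ^ (-p) * Q ^ (-q) ≤ M ^ (-p) * (P ^ (-q) + Q ^ (-q)) := by
  have hP0 : (0:ℝ) < P := lt_of_lt_of_le one_pos hP
  have hQ0 : (0:ℝ) < Q := lt_of_lt_of_le one_pos hQ
  have hq : 0 < q := lt_of_lt_of_le hp hpq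
  rcases hmax with h | h
  · have h1 : P ^ (-p) ≤ M ^ (-p) := Real.rpow_le_rpow_of_nonpos hM h (by linarith)
    calc P ^ (-p) * Q ^ (-q) ≤ M ^ (-p) * Q ^ (-q) :=
          mul_le_mul_of_nonneg_right h1 (Real.rpow_nonneg hQ0.le _)
      _ ≤ M ^ (-p) * (P ^ (-q) + Q ^ (-q)) :=
          mul_le_mul_of_nonneg_left
            (le_add_of_nonneg_left (Real.rpow_nonneg hP0.le _))
            (Real.rpow_nonneg hM.le _)
  · have hQsplit : Q ^ (-q) = Q ^ (-(q - p)) * Q ^ (-p) := by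
      rw [← Real.rpow_add hQ0]
      congr 1
      ring
    have h1 : Q ^ (-p) ≤ M ^ (-p) := Real.rpow_le_rpow_of_nonpos hM h (by linarith)
    have hamgm : P ^ (-p) * Q ^ (-(q - p)) ≤ P ^ (-q) + Q ^ (-q) := by
      have w1 : (0:ℝ) ≤ p / q := by positivity
      have w2 : (0:ℝ) ≤ (q - p) / q := div_nonneg (by linarith) hq.le
      have hw : p / q + (q - p) / q = 1 := by field_simp; ring
      have hgm := Real.geom_mean_le_arith_mean2_weighted w1 w2
        (Real.rpow_nonneg hP0.le (-q)) (Real.rpow_nonneg hQ0.le (-q)) hw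
      have e1 : (P ^ (-q)) ^ (p / q) = P ^ (-p) := by
        rw [← Real.rpow_mul hP0.le]
        congr 1
        field_simp
      have e2 : (Q ^ (-q)) ^ ((q - p) / q) = Q ^ (-(q - p)) := by
        rw [← Real.rpow_mul hQ0.le]
        congr 1
        field_simp
      rw [e1, e2] at hgm
      have hb1 : p / q ≤ 1 := by rw [div_le_one hq]; linarith
      have hb2 : (q - p) / q ≤ 1 := by rw [div_le_one hq]; linarith
      nlinarith [Real.rpow_nonneg hP0.le (-q), Real.rpow_nonneg hQ0.le (-q)]
    calc P ^ (-p) * Q ^ (-q) = Q ^ (-p) * (P ^ (-p) * Q ^ (-(q - p))) := by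
          rw [hQsplit]; ring
      _ ≤ M ^ (-p) * (P ^ (-q) + Q ^ (-q)) := by
          apply mul_le_mul h1 hamgm
          · positivity
          · exact Real.rpow_nonneg hM.le _

set_option maxHeartbeats 1000000 in
/-- Interaction estimate between two translated algebraically decaying profiles,
case `α₂ > 2`: the integral is `O(t^{-2α₁})`. -/
theorem interaction_estimate_case_one (f1 f2 : E4 → ℝ)
    (hf1 : Continuous f1) (hf2 : Continuous f2) (C : ℝ)
    (hC : ∀ x : E4, |f1 x| ≤ C * Real.sqrt (1 + ‖x‖ ^ 2) ^ (-2 : ℤ)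
      ∧ |f2 x| ≤ C * Real.sqrt (1 + ‖x‖ ^ 2) ^ (-2 : ℤ))
    (v1 v2 : E4) (hv : v1 ≠ v2)
    (α1 α2 : ℝ) (hα1 : 0 < α1) (hα12 : α1 ≤ α2) (hsum : 2 < α1 + α2) (hα2 : 2 < α2) :
    ∃ T0 > 0, ∃ C' > 0, ∀ t ≥ T0,
      (∫ x : E4, |f1 (x - t • v1)| ^ α1 * |f2 (x - t • v2)| ^ α2)
        ≤ C' * t ^ (-(2 * α1)) := by
  have hC0 : 0 ≤ C := by
    have h := (hC 0).1
    simp at h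
    exact le_trans (abs_nonneg _) h
  set nd : ℝ := ‖v1 - v2‖ with hnd
  have hnd0 : 0 < nd := by
    rw [hnd, norm_pos_iff]
    exact sub_ne_zero.mpr hv
  set s : E4 → ℝ := fun y => Real.sqrt (1 + ‖y‖ ^ 2) with hs
  have hs1 : ∀ y, 1 ≤ s y := fun y => by
    show (1:ℝ) ≤ Real.sqrt (1 + ‖y‖ ^ 2)
    rw [Real.one_le_sqrt]
    nlinarith [sq_nonneg ‖y‖]
  have hs0 : ∀ y, 0 < s y := fun y => lt_of_lt_of_le one_pos (hs1 y)
  have hsnorm : ∀ y : E4, ‖y‖ ≤ s y := fun y => by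
    show ‖y‖ ≤ Real.sqrt (1 + ‖y‖ ^ 2)
    rw [Real.le_sqrt (norm_nonneg y) (by positivity)]
    nlinarith [sq_nonneg ‖y‖]
  have hint : Integrable (fun y : E4 => s y ^ (-(2 * α2))) := jb_integrable (r := 2 * α2) (by linarith)
  have hI0 : 0 ≤ ∫ y : E4, s y ^ (-(2 * α2)) :=
    integral_nonneg fun y => Real.rpow_nonneg (hs0 y).le _
  set I : ℝ := ∫ y : E4, s y ^ (-(2 * α2)) with hI
  refine ⟨4 / nd, by positivity, C ^ α1 * C ^ α2 * (nd / 2) ^ (-(2 * α1)) * (2 * I) + 1,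
    ?_, ?_⟩
  · have h1 : 0 ≤ C ^ α1 * C ^ α2 * (nd / 2) ^ (-(2 * α1)) * (2 * I) :=
      mul_nonneg (mul_nonneg (mul_nonneg (Real.rpow_nonneg hC0 α1)
        (Real.rpow_nonneg hC0 α2))
        (Real.rpow_nonneg (by positivity) _)) (by linarith)
    linarith
  intro t ht
  have ht0 : 0 < t := lt_of_lt_of_le (by positivity) ht
  set a := t • v1 with ha
  set b := t • v2 with hb
  have hab : ‖a - b‖ = t * nd := by
    rw [ha, hb, ← smul_sub, norm_smul, Real.norm_eq_abs, abs_of_pos ht0, hnd]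
  -- pointwise bound on powers
  have hpow : ∀ (g : E4 → ℝ) (α : ℝ), 0 < α →
      (∀ y, |g y| ≤ C * Real.sqrt (1 + ‖y‖ ^ 2) ^ (-2 : ℤ)) →
      ∀ y, |g y| ^ α ≤ C ^ α * s y ^ (-(2 * α)) := by
    intro g α hα hg y
    have hz : Real.sqrt (1 + ‖y‖ ^ 2) ^ (-2 : ℤ) = s y ^ (-(2 : ℝ)) := by
      rw [← Real.rpow_intCast (s y) (-2)]
      norm_num
    have h1 : |g y| ^ α ≤ (C * s y ^ (-(2:ℝ))) ^ α := by
      apply Real.rpow_le_rpow (abs_nonneg _) _ hα.le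
      rw [← hz]
      exact hg y
    have h2 : (C * s y ^ (-(2:ℝ))) ^ α = C ^ α * (s y ^ (-(2:ℝ))) ^ α :=
      Real.mul_rpow hC0 (Real.rpow_nonneg (hs0 y).le _)
    have h3 : (s y ^ (-(2:ℝ))) ^ α = s y ^ (-(2 * α)) := by
      rw [← Real.rpow_mul (hs0 y).le]
      congr 1
      ring
    rw [h2, h3] at h1
    exact h1
  set M : ℝ := t * nd / 2 with hM
  have hM0 : 0 < M := by positivity
  -- pointwise domination
  set B : E4 → ℝ := fun x =>
    C ^ α1 * C ^ α2 * M ^ (-(2 * α1)) *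
      (s (x - a) ^ (-(2 * α2)) + s (x - b) ^ (-(2 * α2))) with hB
  have hBint : Integrable B :=
    (((hint.comp_sub_right a).add (hint.comp_sub_right b)).const_mul _)
  have hmono : ∀ x : E4, |f1 (x - a)| ^ α1 * |f2 (x - b)| ^ α2 ≤ B x := by
    intro x
    have h1 := hpow f1 α1 hα1 (fun y => (hC y).1) (x - a)
    have h2 := hpow f2 α2 (lt_of_lt_of_le hα1 hα12) (fun y => (hC y).2) (x - b)
    have hmax : M ≤ s (x - a) ∨ M ≤ s (x - b) := by
      have htri : t * nd ≤ s (x - a) + s (x - b) := by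
        have : ‖a - b‖ ≤ ‖x - a‖ + ‖x - b‖ := by
          have := norm_sub_le_norm_sub_add_norm_sub a x b
          linarith [norm_sub_rev a x ▸ this]
        calc t * nd = ‖a - b‖ := hab.symm
          _ ≤ ‖x - a‖ + ‖x - b‖ := this
          _ ≤ s (x - a) + s (x - b) := add_le_add (hsnorm _) (hsnorm _)
      rcases le_total (s (x - a)) (s (x - b)) with hle | hle
      · right; rw [hM]; linarith
      · left; rw [hM]; linarith
    have hkey := key_pointwise (hs1 (x - a)) (hs1 (x - b)) hM0
      (by linarith : (0:ℝ) < 2 * α1) (by linarith : 2 * α1 ≤ 2 * α2) hmax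
    calc |f1 (x - a)| ^ α1 * |f2 (x - b)| ^ α2
        ≤ (C ^ α1 * s (x - a) ^ (-(2 * α1))) * (C ^ α2 * s (x - b) ^ (-(2 * α2))) := by
          apply mul_le_mul h1 h2 (Real.rpow_nonneg (abs_nonneg _) _)
          have := Real.rpow_nonneg hC0 α1
          have := Real.rpow_nonneg (hs0 (x - a)).le (-(2 * α1))
          positivity
      _ = C ^ α1 * C ^ α2 * (s (x - a) ^ (-(2 * α1)) * s (x - b) ^ (-(2 * α2))) := by ring
      _ ≤ C ^ α1 * C ^ α2 * (M ^ (-(2 * α1)) * (s (x - a) ^ (-(2 * α2)) + s (x - b) ^ (-(2 * α2)))) := by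
          apply mul_le_mul_of_nonneg_left hkey
          have := Real.rpow_nonneg hC0 α1
          have := Real.rpow_nonneg hC0 α2
          positivity
      _ = B x := by rw [hB]; ring
  have hIB : ∫ x : E4, B x = C ^ α1 * C ^ α2 * M ^ (-(2 * α1)) * (2 * I) := by
    rw [hB]
    rw [integral_const_mul]
    rw [integral_add (hint.comp_sub_right a) (hint.comp_sub_right b)]
    rw [integral_sub_right_eq_self (fun y => s y ^ (-(2 * α2))) a,
      integral_sub_right_eq_self (fun y => s y ^ (-(2 * α2))) b]
    rw [hI]
    ring
  have hle : (∫ x : E4, |f1 (x - a)| ^ α1 * |f2 (x - b)| ^ α2) ≤ ∫ x : E4, B x := by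
    apply integral_mono_of_nonneg
    · exact Filter.Eventually.of_forall fun x => by
        have := Real.rpow_nonneg (abs_nonneg (f1 (x - a))) α1
        have := Real.rpow_nonneg (abs_nonneg (f2 (x - b))) α2
        positivity
    · exact hBint
    · exact Filter.Eventually.of_forall hmono
  have hMval : M ^ (-(2 * α1)) = (nd / 2) ^ (-(2 * α1)) * t ^ (-(2 * α1)) := by
    rw [hM]
    rw [show t * nd / 2 = (nd / 2) * t by ring]
    exact Real.mul_rpow (by positivity) ht0.le
  calc (∫ x : E4, |f1 (x - a)| ^ α1 * |f2 (x - b)| ^ α2)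
      ≤ ∫ x : E4, B x := hle
    _ = C ^ α1 * C ^ α2 * M ^ (-(2 * α1)) * (2 * I) := hIB
    _ = (C ^ α1 * C ^ α2 * (nd / 2) ^ (-(2 * α1)) * (2 * I)) * t ^ (-(2 * α1)) := by
        rw [hMval]; ring
    _ ≤ (C ^ α1 * C ^ α2 * (nd / 2) ^ (-(2 * α1)) * (2 * I) + 1) * t ^ (-(2 * α1)) := by
        apply mul_le_mul_of_nonneg_right (by linarith) (Real.rpow_nonneg ht0.le _)
end
end

section
/- Let $f_1, f_2 : \mathbb{R}^4 \to \mathbb{R}$ be continuous with $|f_i(x)| \le C\langle x\rangle^{-2}$, let $v_1 \ne v_2 \in \mathbb{R}^4$, and let $0 < \alpha_1 \le \alpha_2 < 2$ with $\alpha_1 + \alpha_2 > 2$. Then there exist $T_0, C' > 0$ such that for all $t \ge T_0$, $\int_{\mathbb{R}^4} |f_1(x - v_1 t)|^{\alpha_1} |f_2(x - v_2 t)|^{\alpha_2} \, dx \le C' t^{4 - 2(\alpha_1+\alpha_2)}$. -/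
noncomputable section

open MeasureTheory

open Metric Filter

lemma swap_pow {x : ℝ} (hx : 0 ≤ x) (n : ℕ) (y : ℝ) : (x ^ n) ^ y = (x ^ y) ^ n := by
  rw [← Real.rpow_natCast x n, ← Real.rpow_mul hx, mul_comm, Real.rpow_mul hx,
    Real.rpow_natCast]

lemma integrableOn_rpow_neg_ball {p : ℝ} (hp0 : 0 < p) (hp : p < 4) {R : ℝ} (hR : 0 < R) :
    IntegrableOn (fun x : E4 => ‖x‖ ^ (-p)) (ball (0 : E4) R) := by
  have hmeas : Measurable fun x : E4 => ‖x‖ ^ (-p) := measurable_norm.pow_const _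
  refine ⟨hmeas.aestronglyMeasurable.restrict, ?_⟩
  rw [hasFiniteIntegral_iff_ofReal
    (Eventually.of_forall fun x => Real.rpow_nonneg (norm_nonneg _) _)]
  set S : ℕ → Set E4 := fun n => ball 0 (R * 2⁻¹ ^ n) \ ball 0 (R * 2⁻¹ ^ (n + 1)) with hS
  have hcover : ball (0 : E4) R ⊆ (⋃ n, S n) ∪ {0} := by
    intro x hx
    rcases eq_or_ne x 0 with rfl | hx0
    · exact Set.mem_union_right _ rfl
    · left
      have hxn : 0 < ‖x‖ := norm_pos_iff.mpr hx0
      have hxR : ‖x‖ < R := by simpa [mem_ball_zero_iff] using hx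
      have hex : ∃ n : ℕ, R * 2⁻¹ ^ (n + 1) ≤ ‖x‖ := by
        obtain ⟨n, hn⟩ := exists_pow_lt_of_lt_one (div_pos hxn hR) (by norm_num : (2:ℝ)⁻¹ < 1)
        refine ⟨n, ?_⟩
        have h1 : (2:ℝ)⁻¹ ^ (n + 1) ≤ 2⁻¹ ^ n := by
          apply pow_le_pow_of_le_one (by norm_num) (by norm_num); omega
        have h2 : R * 2⁻¹ ^ n < ‖x‖ := by
          rw [← lt_div_iff₀' hR]; exact hn
        nlinarith
      refine Set.mem_iUnion.2 ⟨Nat.find hex, ?_, ?_⟩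
      · rw [mem_ball_zero_iff]
        rcases Nat.eq_zero_or_pos (Nat.find hex) with h0 | hpos
        · rw [h0]; simpa using hxR
        · obtain ⟨m, hm⟩ := Nat.exists_eq_succ_of_ne_zero hpos.ne'
          have hmin := Nat.find_min hex (m := m) (by omega)
          push_neg at hmin
          rw [hm]
          exact hmin
      · rw [mem_ball_zero_iff, not_lt]
        exact Nat.find_spec hex
  calc ∫⁻ x in ball (0:E4) R, ENNReal.ofReal (‖x‖ ^ (-p))
      ≤ ∫⁻ x in (⋃ n, S n) ∪ {0}, ENNReal.ofReal (‖x‖ ^ (-p)) :=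
        lintegral_mono_set hcover
    _ ≤ (∫⁻ x in (⋃ n, S n), ENNReal.ofReal (‖x‖ ^ (-p)))
        + ∫⁻ x in ({0} : Set E4), ENNReal.ofReal (‖x‖ ^ (-p)) := lintegral_union_le _ _ _
    _ < ⊤ := by
        rw [setLIntegral_measure_zero _ _ (measure_singleton _), add_zero]
        refine lt_of_le_of_lt (lintegral_iUnion_le _ _) ?_
        have hterm : ∀ n : ℕ, (∫⁻ x in S n, ENNReal.ofReal (‖x‖ ^ (-p)))
            ≤ ENNReal.ofReal (2 ^ (4:ℕ) * (R/2) ^ ((4:ℝ) - p)) * volume (ball (0:E4) 1)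
              * (ENNReal.ofReal ((2:ℝ)⁻¹ ^ ((4:ℝ) - p))) ^ n := by
          intro n
          set c : ℝ := R * 2⁻¹ ^ (n + 1) with hc
          have hc0 : 0 < c := by positivity
          have hkey : c ^ (-p) * (R * 2⁻¹ ^ n) ^ (4:ℕ)
              = 2 ^ (4:ℕ) * (R/2) ^ ((4:ℝ) - p) * ((2:ℝ)⁻¹ ^ ((4:ℝ) - p)) ^ n := by
            have hcu : c = (R/2) * 2⁻¹ ^ n := by rw [hc]; ring
            have hu0 : (0:ℝ) < (R/2) * 2⁻¹ ^ n := by positivity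
            have hR2 : R * 2⁻¹ ^ n = 2 * ((R/2) * 2⁻¹ ^ n) := by ring
            rw [hcu, hR2, mul_pow, ← mul_assoc, mul_comm (((R/2) * 2⁻¹ ^ n) ^ (-p)) _,
              mul_assoc, ← Real.rpow_natCast ((R/2) * 2⁻¹ ^ n) 4, ← Real.rpow_add hu0,
              Real.mul_rpow (by positivity) (by positivity), swap_pow (by norm_num) n]
            ring_nf
          calc ∫⁻ x in S n, ENNReal.ofReal (‖x‖ ^ (-p))
              ≤ ∫⁻ _x in S n, ENNReal.ofReal (c ^ (-p)) := by
                refine setLIntegral_mono' (measurableSet_ball.diff measurableSet_ball) ?_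
                intro x hx
                apply ENNReal.ofReal_le_ofReal
                have hxc : c ≤ ‖x‖ := by
                  have := hx.2; rw [mem_ball_zero_iff, not_lt] at this; exact this
                exact Real.rpow_le_rpow_of_nonpos hc0 hxc (by linarith)
            _ = ENNReal.ofReal (c ^ (-p)) * volume (S n) := setLIntegral_const _ _
            _ ≤ ENNReal.ofReal (c ^ (-p)) * volume (ball (0:E4) (R * 2⁻¹ ^ n)) := by
                exact mul_le_mul_right (measure_mono Set.diff_subset) _
            _ = ENNReal.ofReal (c ^ (-p)) *
                (ENNReal.ofReal ((R * 2⁻¹ ^ n) ^ (4:ℕ)) * volume (ball (0:E4) 1)) := by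
                rw [Measure.addHaar_ball volume (0:E4)
                  (by positivity : (0:ℝ) ≤ R * 2⁻¹ ^ n)]
                norm_num [finrank_euclideanSpace_fin]
            _ = ENNReal.ofReal (c ^ (-p) * (R * 2⁻¹ ^ n) ^ (4:ℕ)) * volume (ball (0:E4) 1) := by
                rw [ENNReal.ofReal_mul (Real.rpow_nonneg hc0.le _)]; ring
            _ = ENNReal.ofReal (2 ^ (4:ℕ) * (R/2) ^ ((4:ℝ) - p)) * volume (ball (0:E4) 1)
                  * (ENNReal.ofReal ((2:ℝ)⁻¹ ^ ((4:ℝ) - p))) ^ n := by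
                rw [hkey, ENNReal.ofReal_mul (by positivity),
                  ← ENNReal.ofReal_pow (by positivity)]
                ring
        refine lt_of_le_of_lt (ENNReal.tsum_le_tsum hterm) ?_
        rw [ENNReal.tsum_mul_left, ENNReal.tsum_geometric]
        have hw : ENNReal.ofReal ((2:ℝ)⁻¹ ^ ((4:ℝ) - p)) < 1 := by
          rw [ENNReal.ofReal_lt_one]
          exact Real.rpow_lt_one (by norm_num) (by norm_num) (by linarith)
        refine ENNReal.mul_lt_top (ENNReal.mul_lt_top ENNReal.ofReal_lt_top measure_ball_lt_top) ?_
        rw [ENNReal.inv_lt_top]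
        exact tsub_pos_iff_lt.mpr hw

lemma integrableOn_rpow_neg_ball' {p : ℝ} (hp0 : 0 < p) (hp : p < 4) {R : ℝ} (hR : 0 < R)
    (c : E4) : IntegrableOn (fun x : E4 => ‖x - c‖ ^ (-p)) (ball c R) := by
  have h := integrableOn_rpow_neg_ball hp0 hp hR
  rw [← integrable_indicator_iff measurableSet_ball] at h ⊢
  have := h.comp_sub_right c
  convert this using 1
  · rfl
  funext x
  simp only [Set.indicator]
  by_cases hx : x ∈ ball c R
  · rw [if_pos hx, if_pos (by simpa [mem_ball_zero_iff, dist_eq_norm] using hx)]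
  · rw [if_neg hx, if_neg (by simpa [mem_ball_zero_iff, dist_eq_norm] using hx)]

lemma integrableOn_rpow_neg_compl {s : ℝ} (hs : 4 < s) {R : ℝ} (hR : 0 < R) (c : E4) :
    IntegrableOn (fun x : E4 => ‖x - c‖ ^ (-s)) ((ball c R)ᶜ) := by
  have hint : Integrable fun x : E4 => (1 + R⁻¹) ^ s * ((1 + ‖x - c‖) ^ (-s)) := by
    exact ((integrable_one_add_norm (by
      rw [finrank_euclideanSpace_fin]; exact_mod_cast hs)).const_mul _).comp_sub_right c
  refine Integrable.mono' hint.integrableOn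
    (((measurable_id.sub_const c).norm.pow_const _).aestronglyMeasurable.restrict) ?_
  rw [ae_restrict_iff' measurableSet_ball.compl]
  refine Eventually.of_forall fun x hx => ?_
  have hu : R ≤ ‖x - c‖ := by
    simpa [mem_ball, dist_eq_norm, not_lt] using hx
  have hu0 : 0 < ‖x - c‖ := lt_of_lt_of_le hR hu
  rw [Real.norm_eq_abs, abs_of_nonneg (Real.rpow_nonneg (norm_nonneg _) _)]
  have h1 : 1 + ‖x - c‖ ≤ (1 + R⁻¹) * ‖x - c‖ := by
    have : (1:ℝ) ≤ R⁻¹ * ‖x - c‖ := by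
      have h := mul_le_mul_of_nonneg_left hu (inv_nonneg.mpr hR.le)
      rwa [inv_mul_cancel₀ hR.ne'] at h
    linarith
  have h2 : ((1 + R⁻¹) * ‖x - c‖) ^ (-s) ≤ (1 + ‖x - c‖) ^ (-s) :=
    Real.rpow_le_rpow_of_nonpos (by positivity) h1 (by linarith)
  calc ‖x - c‖ ^ (-s) = (1 + R⁻¹) ^ s * ((1 + R⁻¹) ^ (-s) * ‖x - c‖ ^ (-s)) := by
        rw [← mul_assoc, ← Real.rpow_add (by positivity : (0:ℝ) < 1 + R⁻¹)]
        simp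
    _ = (1 + R⁻¹) ^ s * ((1 + R⁻¹) * ‖x - c‖) ^ (-s) := by
        rw [Real.mul_rpow (by positivity) (norm_nonneg _)]
    _ ≤ (1 + R⁻¹) ^ s * (1 + ‖x - c‖) ^ (-s) := by
        exact mul_le_mul_of_nonneg_left h2 (by positivity)

lemma integrable_prod_rpow {p q : ℝ} (hp0 : 0 < p) (hp4 : p < 4) (hq0 : 0 < q) (hq4 : q < 4)
    (hpq : 4 < p + q) {a b : E4} (hab : a ≠ b) :
    Integrable (fun x : E4 => ‖x - a‖ ^ (-p) * ‖x - b‖ ^ (-q)) := by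
  set r : ℝ := dist a b / 2 with hr
  have hd : 0 < dist a b := dist_pos.mpr hab
  have hr0 : 0 < r := by positivity
  have hmeas : AEStronglyMeasurable (fun x : E4 => ‖x - a‖ ^ (-p) * ‖x - b‖ ^ (-q)) volume :=
    (((measurable_id.sub_const a).norm.pow_const _).mul
      ((measurable_id.sub_const b).norm.pow_const _)).aestronglyMeasurable
  have hab2 : dist a b = 2 * r := by rw [hr]; ring
  have h1 : IntegrableOn (fun x : E4 => ‖x - a‖ ^ (-p) * ‖x - b‖ ^ (-q)) (ball a r) := by
    have hdom : IntegrableOn (fun x : E4 => r ^ (-q) * ‖x - a‖ ^ (-p)) (ball a r) :=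
      Integrable.const_mul (integrableOn_rpow_neg_ball' hp0 hp4 hr0 a) _
    refine Integrable.mono' hdom hmeas.restrict ?_
    rw [ae_restrict_iff' measurableSet_ball]
    refine Eventually.of_forall fun x hx => ?_
    rw [Real.norm_eq_abs, abs_of_nonneg
      (mul_nonneg (Real.rpow_nonneg (norm_nonneg _) _) (Real.rpow_nonneg (norm_nonneg _) _))]
    have hxb : r ≤ ‖x - b‖ := by
      rw [← dist_eq_norm, dist_eq_norm] at *
      have hd1 : ‖x - a‖ < r := by rw [← dist_eq_norm]; exact mem_ball.mp hx
      have hd2 : ‖a - b‖ ≤ ‖a - x‖ + ‖x - b‖ := norm_sub_le_norm_sub_add_norm_sub a x b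
      have hd3 : ‖a - x‖ = ‖x - a‖ := norm_sub_rev a x
      have hd4 : ‖a - b‖ = 2 * r := by rw [← dist_eq_norm]; exact hab2
      linarith
    have : ‖x - b‖ ^ (-q) ≤ r ^ (-q) :=
      Real.rpow_le_rpow_of_nonpos hr0 hxb (by linarith)
    calc ‖x - a‖ ^ (-p) * ‖x - b‖ ^ (-q) ≤ ‖x - a‖ ^ (-p) * r ^ (-q) :=
          mul_le_mul_of_nonneg_left this (Real.rpow_nonneg (norm_nonneg _) _)
      _ = r ^ (-q) * ‖x - a‖ ^ (-p) := by ring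
  have h2 : IntegrableOn (fun x : E4 => ‖x - a‖ ^ (-p) * ‖x - b‖ ^ (-q)) (ball b r) := by
    have hdom : IntegrableOn (fun x : E4 => r ^ (-p) * ‖x - b‖ ^ (-q)) (ball b r) :=
      Integrable.const_mul (integrableOn_rpow_neg_ball' hq0 hq4 hr0 b) _
    refine Integrable.mono' hdom hmeas.restrict ?_
    rw [ae_restrict_iff' measurableSet_ball]
    refine Eventually.of_forall fun x hx => ?_
    rw [Real.norm_eq_abs, abs_of_nonneg
      (mul_nonneg (Real.rpow_nonneg (norm_nonneg _) _) (Real.rpow_nonneg (norm_nonneg _) _))]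
    have hxa : r ≤ ‖x - a‖ := by
      have hd1 : ‖x - b‖ < r := by rw [← dist_eq_norm]; exact mem_ball.mp hx
      have hd2 : ‖a - b‖ ≤ ‖a - x‖ + ‖x - b‖ := norm_sub_le_norm_sub_add_norm_sub a x b
      have hd3 : ‖a - x‖ = ‖x - a‖ := norm_sub_rev a x
      have hd4 : ‖a - b‖ = 2 * r := by rw [← dist_eq_norm]; exact hab2
      linarith
    have : ‖x - a‖ ^ (-p) ≤ r ^ (-p) :=
      Real.rpow_le_rpow_of_nonpos hr0 hxa (by linarith)
    exact mul_le_mul_of_nonneg_right this (Real.rpow_nonneg (norm_nonneg _) _)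
  have h3 : IntegrableOn (fun x : E4 => ‖x - a‖ ^ (-p) * ‖x - b‖ ^ (-q))
      ((ball a r ∪ ball b r)ᶜ) := by
    have hdom : IntegrableOn (fun x : E4 => (3:ℝ) ^ q * ‖x - a‖ ^ (-(p + q)))
        ((ball a r ∪ ball b r)ᶜ) := by
      refine IntegrableOn.mono_set ?_ (Set.compl_subset_compl.mpr Set.subset_union_left)
      exact Integrable.const_mul
        (integrableOn_rpow_neg_compl (by linarith : (4:ℝ) < p + q) hr0 a) _
    refine Integrable.mono' hdom hmeas.restrict ?_
    rw [ae_restrict_iff' (measurableSet_ball.union measurableSet_ball).compl]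
    refine Eventually.of_forall fun x hx => ?_
    rw [Set.mem_compl_iff, Set.mem_union, not_or] at hx
    have hxa : r ≤ ‖x - a‖ := by
      rw [← dist_eq_norm]; simpa [mem_ball, not_lt] using hx.1
    have hxb : r ≤ ‖x - b‖ := by
      rw [← dist_eq_norm]; simpa [mem_ball, not_lt] using hx.2
    have hxa0 : 0 < ‖x - a‖ := lt_of_lt_of_le hr0 hxa
    have hxb0 : 0 < ‖x - b‖ := lt_of_lt_of_le hr0 hxb
    rw [Real.norm_eq_abs, abs_of_nonneg
      (mul_nonneg (Real.rpow_nonneg (norm_nonneg _) _) (Real.rpow_nonneg (norm_nonneg _) _))]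
    -- ‖x-a‖/3 ≤ ‖x-b‖
    have hkey : ‖x - a‖ / 3 ≤ ‖x - b‖ := by
      rcases le_or_gt (‖x - a‖) (3 * r) with hcase | hcase
      · linarith
      · have htri : ‖x - a‖ ≤ ‖x - b‖ + ‖b - a‖ := norm_sub_le_norm_sub_add_norm_sub x b a
        have hab' : ‖b - a‖ = 2 * r := by rw [norm_sub_rev, ← dist_eq_norm]; exact hab2
        calc ‖x - a‖ / 3 ≤ ‖x - a‖ - 2 * r := by linarith
          _ ≤ ‖x - b‖ := by linarith
    have hq' : ‖x - b‖ ^ (-q) ≤ (3:ℝ) ^ q * ‖x - a‖ ^ (-q) := by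
      have h1 : (‖x - a‖ / 3) ^ (-q) = (3:ℝ) ^ q * ‖x - a‖ ^ (-q) := by
        rw [div_eq_mul_inv, Real.mul_rpow (norm_nonneg _) (by norm_num),
          Real.inv_rpow (by norm_num), ← Real.rpow_neg (by norm_num), neg_neg]
        ring
      rw [← h1]
      exact Real.rpow_le_rpow_of_nonpos (by positivity) hkey (by linarith)
    calc ‖x - a‖ ^ (-p) * ‖x - b‖ ^ (-q)
        ≤ ‖x - a‖ ^ (-p) * ((3:ℝ) ^ q * ‖x - a‖ ^ (-q)) :=
          mul_le_mul_of_nonneg_left hq' (Real.rpow_nonneg (norm_nonneg _) _)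
      _ = (3:ℝ) ^ q * ‖x - a‖ ^ (-(p + q)) := by
          rw [neg_add, Real.rpow_add hxa0]; ring
  rw [← integrableOn_univ]
  have : (Set.univ : Set E4) = (ball a r ∪ ball b r) ∪ (ball a r ∪ ball b r)ᶜ :=
    (Set.union_compl_self _).symm
  rw [this]
  exact ((h1.union h2).union h3)

lemma scaling_integral {p q : ℝ} (a b : E4) {t : ℝ} (ht : 0 < t) :
    ∫ x : E4, ‖x - t • a‖ ^ (-p) * ‖x - t • b‖ ^ (-q)
      = t ^ ((4:ℝ) - (p + q)) * ∫ x : E4, ‖x - a‖ ^ (-p) * ‖x - b‖ ^ (-q) := by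
  have h := MeasureTheory.Measure.integral_comp_smul volume
    (fun x : E4 => ‖x - t • a‖ ^ (-p) * ‖x - t • b‖ ^ (-q)) t
  rw [finrank_euclideanSpace_fin] at h
  have hLHS : ∀ x : E4, ‖t • x - t • a‖ ^ (-p) * ‖t • x - t • b‖ ^ (-q)
      = (t ^ (-p) * t ^ (-q)) * (‖x - a‖ ^ (-p) * ‖x - b‖ ^ (-q)) := by
    intro x
    rw [← smul_sub, ← smul_sub, norm_smul, norm_smul, Real.norm_eq_abs, abs_of_pos ht,
      Real.mul_rpow ht.le (norm_nonneg _), Real.mul_rpow ht.le (norm_nonneg _)]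
    ring
  simp only [hLHS] at h
  rw [integral_const_mul, abs_of_pos (by positivity : (0:ℝ) < (t ^ (4:ℕ))⁻¹),
    smul_eq_mul] at h
  have ht4 : (0:ℝ) < t ^ (4:ℕ) := by positivity
  rw [eq_comm, inv_mul_eq_iff_eq_mul₀ ht4.ne'] at h
  rw [h, show ((4:ℝ) - (p + q)) = (4:ℕ) + (-p + -q) by push_cast; ring,
    Real.rpow_add ht, Real.rpow_add ht, Real.rpow_natCast]
  ring

lemma pointwise_key {g : E4 → ℝ} {D : ℝ} (hD : 0 < D)
    (hg : ∀ y : E4, |g y| ≤ D * Real.sqrt (1 + ‖y‖ ^ 2) ^ (-2 : ℤ))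
    {α : ℝ} (hα : 0 < α) {y : E4} (hy : y ≠ 0) :
    |g y| ^ α ≤ D ^ α * ‖y‖ ^ (-(2 * α)) := by
  set u := Real.sqrt (1 + ‖y‖ ^ 2) with hu
  have hu1 : (1:ℝ) ≤ u := by
    have h := Real.sqrt_le_sqrt (show (1:ℝ) ≤ 1 + ‖y‖ ^ 2 by nlinarith [sq_nonneg ‖y‖])
    simpa [hu] using h
  have hu0 : (0:ℝ) < u := lt_of_lt_of_le one_pos hu1
  have hyu : ‖y‖ ≤ u := by
    rw [show ‖y‖ = Real.sqrt (‖y‖ ^ 2) from (Real.sqrt_sq (norm_nonneg y)).symm, hu]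
    exact Real.sqrt_le_sqrt (by nlinarith)
  have hy0 : 0 < ‖y‖ := norm_pos_iff.mpr hy
  calc |g y| ^ α ≤ (D * u ^ (-2 : ℤ)) ^ α :=
        Real.rpow_le_rpow (abs_nonneg _) (hg y) hα.le
    _ = D ^ α * (u ^ ((-2 : ℝ))) ^ α := by
        rw [Real.mul_rpow hD.le (by positivity), ← Real.rpow_intCast u (-2)]
        norm_num
    _ = D ^ α * u ^ (-(2 * α)) := by
        rw [← Real.rpow_mul hu0.le, show (-2 : ℝ) * α = -(2 * α) by ring]
    _ ≤ D ^ α * ‖y‖ ^ (-(2 * α)) :=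
        mul_le_mul_of_nonneg_left
          (Real.rpow_le_rpow_of_nonpos hy0 hyu (by linarith)) (Real.rpow_nonneg hD.le _)

/-- Interaction estimate between two translated algebraically decaying profiles,
case `α₂ < 2`: the integral is `O(t^{4-2(α₁+α₂)})`. -/
theorem interaction_estimate_case_two (f1 f2 : E4 → ℝ)
    (hf1 : Continuous f1) (hf2 : Continuous f2) (C : ℝ)
    (hC : ∀ x : E4, |f1 x| ≤ C * Real.sqrt (1 + ‖x‖ ^ 2) ^ (-2 : ℤ)
      ∧ |f2 x| ≤ C * Real.sqrt (1 + ‖x‖ ^ 2) ^ (-2 : ℤ))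
    (v1 v2 : E4) (hv : v1 ≠ v2)
    (α1 α2 : ℝ) (hα1 : 0 < α1) (hα12 : α1 ≤ α2) (hα2 : α2 < 2) (hsum : 2 < α1 + α2) :
    ∃ T0 > 0, ∃ C' > 0, ∀ t ≥ T0,
      (∫ x : E4, |f1 (x - t • v1)| ^ α1 * |f2 (x - t • v2)| ^ α2)
        ≤ C' * t ^ (4 - 2 * (α1 + α2)) := by
  have hC0 : 0 ≤ C := by
    have h := (hC 0).1
    have h2 : C * Real.sqrt (1 + ‖(0:E4)‖ ^ 2) ^ (-2 : ℤ) = C := by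
      norm_num
    rw [h2] at h
    exact le_trans (abs_nonneg _) h
  set D := C + 1 with hD'
  have hD : 0 < D := by rw [hD']; linarith
  have hfD : ∀ x : E4, |f1 x| ≤ D * Real.sqrt (1 + ‖x‖ ^ 2) ^ (-2 : ℤ)
      ∧ |f2 x| ≤ D * Real.sqrt (1 + ‖x‖ ^ 2) ^ (-2 : ℤ) := by
    intro x
    have hpos : (0:ℝ) ≤ Real.sqrt (1 + ‖x‖ ^ 2) ^ (-2 : ℤ) := by positivity
    refine ⟨le_trans (hC x).1 ?_, le_trans (hC x).2 ?_⟩ <;>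
      · rw [hD']; nlinarith
  set p := 2 * α1 with hp'
  set q := 2 * α2 with hq'
  have hα2' : 0 < α2 := lt_of_lt_of_le hα1 hα12
  have hp0 : 0 < p := by rw [hp']; linarith
  have hp4 : p < 4 := by rw [hp']; linarith
  have hq0 : 0 < q := by rw [hq']; linarith
  have hq4 : q < 4 := by rw [hq']; linarith
  have hpq : 4 < p + q := by rw [hp', hq']; linarith
  set J := ∫ x : E4, ‖x - v1‖ ^ (-p) * ‖x - v2‖ ^ (-q) with hJ
  have hJ0 : 0 ≤ J :=
    integral_nonneg fun x => mul_nonneg (Real.rpow_nonneg (norm_nonneg _) _)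
      (Real.rpow_nonneg (norm_nonneg _) _)
  refine ⟨1, one_pos, D ^ (α1 + α2) * J + 1,
    add_pos_of_nonneg_of_pos (mul_nonneg (Real.rpow_nonneg hD.le _) hJ0) one_pos, ?_⟩
  intro t ht
  have ht0 : 0 < t := lt_of_lt_of_le one_pos ht
  have hab : t • v1 ≠ t • v2 := fun hh => hv (smul_right_injective E4 ht0.ne' hh)
  have hGint : Integrable (fun x : E4 =>
      D ^ (α1 + α2) * (‖x - t • v1‖ ^ (-p) * ‖x - t • v2‖ ^ (-q))) :=
    (integrable_prod_rpow hp0 hp4 hq0 hq4 hpq hab).const_mul _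
  have hFnn : 0 ≤ᵐ[volume] fun x : E4 => |f1 (x - t • v1)| ^ α1 * |f2 (x - t • v2)| ^ α2 :=
    Eventually.of_forall fun x => mul_nonneg (Real.rpow_nonneg (abs_nonneg _) _)
      (Real.rpow_nonneg (abs_nonneg _) _)
  have hne1 : ∀ᵐ x : E4, x ≠ t • v1 := by
    refine ae_iff.mpr ?_
    have h : {x : E4 | ¬ x ≠ t • v1} = {t • v1} := by ext x; simp
    rw [h]; exact measure_singleton _
  have hne2 : ∀ᵐ x : E4, x ≠ t • v2 := by
    refine ae_iff.mpr ?_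
    have h : {x : E4 | ¬ x ≠ t • v2} = {t • v2} := by ext x; simp
    rw [h]; exact measure_singleton _
  have hbound : (fun x : E4 => |f1 (x - t • v1)| ^ α1 * |f2 (x - t • v2)| ^ α2)
      ≤ᵐ[volume] fun x : E4 =>
        D ^ (α1 + α2) * (‖x - t • v1‖ ^ (-p) * ‖x - t • v2‖ ^ (-q)) := by
    filter_upwards [hne1, hne2] with x hx1 hx2
    have k1 := pointwise_key hD (fun y => (hfD y).1) hα1 (sub_ne_zero.mpr hx1)
    have k2 := pointwise_key hD (fun y => (hfD y).2) hα2' (sub_ne_zero.mpr hx2)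
    calc |f1 (x - t • v1)| ^ α1 * |f2 (x - t • v2)| ^ α2
        ≤ (D ^ α1 * ‖x - t • v1‖ ^ (-(2 * α1))) * (D ^ α2 * ‖x - t • v2‖ ^ (-(2 * α2))) :=
          mul_le_mul k1 k2 (Real.rpow_nonneg (abs_nonneg _) _)
            (mul_nonneg (Real.rpow_nonneg hD.le _) (Real.rpow_nonneg (norm_nonneg _) _))
      _ = D ^ (α1 + α2) * (‖x - t • v1‖ ^ (-p) * ‖x - t • v2‖ ^ (-q)) := by
          rw [Real.rpow_add hD, hp', hq']; ring
  have hmono := integral_mono_of_nonneg hFnn hGint hbound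
  have heq : (∫ x : E4, D ^ (α1 + α2) * (‖x - t • v1‖ ^ (-p) * ‖x - t • v2‖ ^ (-q)))
      = D ^ (α1 + α2) * (t ^ ((4:ℝ) - (p + q)) * J) := by
    rw [integral_const_mul, scaling_integral v1 v2 ht0, hJ]
  have hexp : (4:ℝ) - (p + q) = 4 - 2 * (α1 + α2) := by rw [hp', hq']; ring
  have hrt : (0:ℝ) ≤ t ^ ((4:ℝ) - 2 * (α1 + α2)) := Real.rpow_nonneg ht0.le _
  calc (∫ x : E4, |f1 (x - t • v1)| ^ α1 * |f2 (x - t • v2)| ^ α2)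
      ≤ ∫ x : E4, D ^ (α1 + α2) * (‖x - t • v1‖ ^ (-p) * ‖x - t • v2‖ ^ (-q)) := hmono
    _ = D ^ (α1 + α2) * (t ^ ((4:ℝ) - 2 * (α1 + α2)) * J) := by rw [heq, hexp]
    _ = (D ^ (α1 + α2) * J) * t ^ ((4:ℝ) - 2 * (α1 + α2)) := by ring
    _ ≤ (D ^ (α1 + α2) * J + 1) * t ^ ((4:ℝ) - 2 * (α1 + α2)) := by nlinarith
end
end

section
/- Let $f_1, f_2 : \mathbb{R}^4 \to \mathbb{R}$ be continuous with $|f_i(x)| \le C\langle x\rangle^{-2}$, let $v_1 \ne v_2 \in \mathbb{R}^4$, and let $\alpha_1 \in (0, 2]$. Then there exist $T_0, C' > 0$ such that for all $t \ge T_0$, $\int_{\mathbb{R}^4} |f_1(x - v_1 t)|^{\alpha_1} |f_2(x - v_2 t)|^{2} \, dx \le C' t^{-2\alpha_1} \log t$. -/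
noncomputable section

open MeasureTheory

open Set Metric

section Aux

lemma log_deriv_aux (x : ℝ) : HasDerivAt (fun y : ℝ => (1/2) * Real.log (1 + y^2)) (x / (1 + x^2)) x := by
  have h0 : (0:ℝ) < 1 + x^2 := by positivity
  have h1 : HasDerivAt (fun y : ℝ => 1 + y^2) (2*x) x := by
    simpa using ((hasDerivAt_pow 2 x).const_add (1:ℝ))
  have h2 := (Real.hasDerivAt_log h0.ne').comp x h1
  have h3 := h2.const_mul (1/2 : ℝ)
  convert h3 using 1
  all_goals first | rfl | ring

lemma oned_J1 {R : ℝ} (hR : 2 ≤ R) :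
    ∫ y in Ioo (0:ℝ) R, y^3 * (1 + y^2)^(-2:ℝ) ≤ 2 * Real.log R := by
  have hR0 : (0:ℝ) < R := by linarith
  have hcont : Continuous (fun y : ℝ => y / (1 + y^2)) :=
    continuous_id.div (by continuity) (fun y => by positivity)
  have key : ∫ y in Ioo (0:ℝ) R, y^3 * (1 + y^2)^(-2:ℝ)
      ≤ ∫ y in Ioo (0:ℝ) R, y / (1 + y^2) := by
    apply integral_mono_of_nonneg
    · refine ae_restrict_of_forall_mem measurableSet_Ioo fun y hy => ?_
      have := hy.1
      positivity
    · exact hcont.integrableOn_Icc.mono_set Ioo_subset_Icc_self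
    · refine ae_restrict_of_forall_mem measurableSet_Ioo fun y hy => ?_
      have hy0 : 0 < y := hy.1
      have hq : (0:ℝ) < 1 + y^2 := by positivity
      dsimp only
      have he : (1 + y^2)^(-2:ℝ) = ((1+y^2)^2)⁻¹ := by
        rw [show ((-2:ℝ)) = ((-2:ℤ):ℝ) by norm_num, Real.rpow_intCast, zpow_neg, zpow_two]
        ring_nf
      rw [he]
      rw [div_eq_mul_inv, ← sub_nonneg]
      have heq : y * (1+y^2)⁻¹ - y^3 * ((1+y^2)^2)⁻¹ = y / (1+y^2)^2 := by
        field_simp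
        ring
      rw [heq]
      positivity
  refine key.trans ?_
  have hval : ∫ y in Ioo (0:ℝ) R, y / (1 + y^2) = (1/2) * Real.log (1 + R^2) := by
    rw [← integral_Ioc_eq_integral_Ioo, ← intervalIntegral.integral_of_le hR0.le]
    rw [intervalIntegral.integral_eq_sub_of_hasDerivAt (fun x _ => log_deriv_aux x)]
    · norm_num
    · exact hcont.intervalIntegrable _ _
  rw [hval]
  have h4 : (4:ℝ) ≤ R^2 := by nlinarith
  have h1 : (1:ℝ) + R^2 ≤ R^4 := by nlinarith
  have h2 : Real.log (1 + R^2) ≤ Real.log (R^4) :=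
    Real.log_le_log (by positivity) h1
  have h3 : Real.log (R^4) = 4 * Real.log R := by
    rw [Real.log_pow]; norm_num
  linarith

lemma oned_J2 {R s : ℝ} (hR : 1 ≤ R) (hs : 0 < s) :
    ∫ y in Ioi R, y^3 * (1 + y^2)^(-(s+2):ℝ) ≤ R^(-(2*s)) / (2*s) := by
  have hR0 : (0:ℝ) < R := by linarith
  have hexp : -(2*s+1) < (-1 : ℝ) := by linarith
  have key : ∫ y in Ioi R, y^3 * (1 + y^2)^(-(s+2):ℝ)
      ≤ ∫ y in Ioi R, y ^ (-(2*s+1)) := by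
    apply integral_mono_of_nonneg
    · refine ae_restrict_of_forall_mem measurableSet_Ioi fun y hy => ?_
      have hy0 : (0:ℝ) < y := lt_of_le_of_lt hR0.le hy
      dsimp only
      positivity
    · exact integrableOn_Ioi_rpow_of_lt hexp hR0
    · refine ae_restrict_of_forall_mem measurableSet_Ioi fun y hy => ?_
      have hy0 : (0:ℝ) < y := lt_of_le_of_lt hR0.le hy
      dsimp only
      have h1 : (1 + y^2 : ℝ)^(-(s+2):ℝ) ≤ (y^2 : ℝ)^(-(s+2):ℝ) :=
        Real.rpow_le_rpow_of_nonpos (by positivity) (by linarith) (by linarith)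
      have h2 : (y^2 : ℝ)^(-(s+2):ℝ) = y ^ (2 * -(s+2)) := by
        rw [← Real.rpow_natCast y 2, ← Real.rpow_mul hy0.le]
        norm_num
      calc y^3 * (1 + y^2 : ℝ)^(-(s+2):ℝ) ≤ y^3 * (y^2 : ℝ)^(-(s+2):ℝ) := by
            apply mul_le_mul_of_nonneg_left h1 (by positivity)
        _ = y ^ ((3:ℝ) + 2 * -(s+2)) := by
            rw [h2, ← Real.rpow_natCast y 3, ← Real.rpow_add hy0]
            norm_num
        _ = y ^ (-(2*s+1)) := by ring_nf
  refine key.trans ?_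
  rw [integral_Ioi_rpow_of_lt hexp hR0]
  have : -(2*s+1) + 1 = -(2*s) := by ring
  rw [this]
  exact le_of_eq (by ring)

lemma polar4 (f : ℝ → ℝ) :
    ∫ x : E4, f ‖x‖ = 4 * (volume (ball (0:E4) 1)).toReal * ∫ y in Ioi (0:ℝ), y ^ 3 * f y := by
  have := MeasureTheory.integral_fun_norm_addHaar (volume : Measure E4) f
  simp only [finrank_euclideanSpace_fin, smul_eq_mul, nsmul_eq_mul] at this
  rw [this, measureReal_def]; ring



lemma J1_bound {R : ℝ} (hR : 2 ≤ R) :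
    ∫ x : E4, (ball (0:E4) R).indicator (fun y : E4 => (1 + ‖y‖^2)^(-2:ℝ)) x
      ≤ 4 * (volume (ball (0:E4) 1)).toReal * (2 * Real.log R) := by
  have hfun : ∀ x : E4, (ball (0:E4) R).indicator (fun y : E4 => (1 + ‖y‖^2)^(-2:ℝ)) x
      = (Iio R).indicator (fun r : ℝ => (1 + r^2)^(-2:ℝ)) ‖x‖ := by
    intro x
    classical
    rw [Set.indicator_apply, Set.indicator_apply]
    simp [mem_ball_zero_iff]
  simp only [hfun]
  rw [polar4 (fun r : ℝ => (Iio R).indicator (fun r : ℝ => (1 + r^2)^(-2:ℝ)) r)]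
  have h2 : ∀ y : ℝ, y ^ 3 * (Iio R).indicator (fun r : ℝ => (1 + r^2)^(-2:ℝ)) y
      = (Iio R).indicator (fun r : ℝ => r^3 * (1 + r^2)^(-2:ℝ)) y := by
    intro y
    classical
    rw [Set.indicator_apply, Set.indicator_apply]
    split <;> simp
  simp only [h2]
  rw [integral_indicator measurableSet_Iio, Measure.restrict_restrict measurableSet_Iio,
    Set.Iio_inter_Ioi]
  have hcv : (0:ℝ) ≤ 4 * (volume (ball (0:E4) 1)).toReal := by positivity
  exact mul_le_mul_of_nonneg_left (oned_J1 hR) hcv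


lemma J2_bound {R s : ℝ} (hR : 1 ≤ R) (hs : 0 < s) :
    ∫ x : E4, ({y : E4 | R ≤ ‖y‖}).indicator (fun y : E4 => (1 + ‖y‖^2)^(-(s+2):ℝ)) x
      ≤ 4 * (volume (ball (0:E4) 1)).toReal * (R^(-(2*s)) / (2*s)) := by
  have hR0 : (0:ℝ) < R := by linarith
  have hfun : ∀ x : E4, ({y : E4 | R ≤ ‖y‖}).indicator (fun y : E4 => (1 + ‖y‖^2)^(-(s+2):ℝ)) x
      = (Ici R).indicator (fun r : ℝ => (1 + r^2)^(-(s+2):ℝ)) ‖x‖ := by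
    intro x
    classical
    rw [Set.indicator_apply, Set.indicator_apply]
    simp [Set.mem_setOf_eq]
  simp only [hfun]
  rw [polar4 (fun r : ℝ => (Ici R).indicator (fun r : ℝ => (1 + r^2)^(-(s+2):ℝ)) r)]
  have h2 : ∀ y : ℝ, y ^ 3 * (Ici R).indicator (fun r : ℝ => (1 + r^2)^(-(s+2):ℝ)) y
      = (Ici R).indicator (fun r : ℝ => r^3 * (1 + r^2)^(-(s+2):ℝ)) y := by
    intro y
    classical
    rw [Set.indicator_apply, Set.indicator_apply]
    split <;> simp
  simp only [h2]
  rw [integral_indicator measurableSet_Ici, Measure.restrict_restrict measurableSet_Ici]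
  have hsub : Ici R ∩ Ioi (0:ℝ) = Ici R := by
    apply Set.inter_eq_self_of_subset_left
    exact fun x hx => lt_of_lt_of_le hR0 hx
  rw [hsub, integral_Ici_eq_integral_Ioi]
  have hcv : (0:ℝ) ≤ 4 * (volume (ball (0:E4) 1)).toReal := by positivity
  exact mul_le_mul_of_nonneg_left (oned_J2 hR hs) hcv

lemma pointwise_bound (α1 R : ℝ) (hα1 : 0 < α1) (hα1' : α1 ≤ 2) (hR0 : 0 < R)
    (a b : E4) (hab : ‖b - a‖ = 2*R) (x : E4) :
    (1+‖x-a‖^2)^(-α1) * (1+‖x-b‖^2)^(-(2:ℝ)) ≤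
      R^(-(2*α1)) * (ball (0:E4) R).indicator (fun y : E4 => (1+‖y‖^2)^(-2:ℝ)) (x - b)
      + R^(-(2*α1)) * (ball (0:E4) R).indicator (fun y : E4 => (1+‖y‖^2)^(-2:ℝ)) (x - a)
      + (({y : E4 | R ≤ ‖y‖}).indicator (fun y : E4 => (1+‖y‖^2)^(-(α1+2):ℝ)) (x - a)
        + ({y : E4 | R ≤ ‖y‖}).indicator (fun y : E4 => (1+‖y‖^2)^(-(α1+2):ℝ)) (x - b)) := by
  set y1 := x - a with hy1def
  set y2 := x - b with hy2def
  have hy12 : ‖y1 - y2‖ = 2*R := by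
    rw [hy1def, hy2def, show x - a - (x - b) = b - a by abel, hab]
  have hq1 : ∀ y : E4, (0:ℝ) < 1 + ‖y‖^2 := fun y => by positivity
  -- nonnegativity of the four terms
  have hce : (0:ℝ) ≤ R^(-(2*α1)) := Real.rpow_nonneg hR0.le _
  have hind1 : ∀ y : E4, 0 ≤ (ball (0:E4) R).indicator (fun y : E4 => (1+‖y‖^2)^(-2:ℝ)) y :=
    fun y => Set.indicator_nonneg (fun z _ => Real.rpow_nonneg (hq1 z).le _) y
  have hind3 : ∀ y : E4, 0 ≤ ({y : E4 | R ≤ ‖y‖}).indicator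
      (fun y : E4 => (1+‖y‖^2)^(-(α1+2):ℝ)) y :=
    fun y => Set.indicator_nonneg (fun z _ => Real.rpow_nonneg (hq1 z).le _) y
  have hT1 : (0:ℝ) ≤ R^(-(2*α1)) * (ball (0:E4) R).indicator (fun y : E4 => (1+‖y‖^2)^(-2:ℝ)) (x-b) :=
    mul_nonneg hce (hind1 _)
  have hT2 : (0:ℝ) ≤ R^(-(2*α1)) * (ball (0:E4) R).indicator (fun y : E4 => (1+‖y‖^2)^(-2:ℝ)) (x-a) :=
    mul_nonneg hce (hind1 _)
  have hT3 := hind3 (x - a)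
  have hT4 := hind3 (x - b)
  -- key : if R ≤ ‖y‖ then (1+‖y‖^2)^(-α1) ≤ R^(-(2*α1))
  have hkey : ∀ y : E4, R ≤ ‖y‖ → (1+‖y‖^2)^(-α1) ≤ R^(-(2*α1)) := by
    intro y hy
    have h1 : R^(-(2*α1)) = (R^2)^(-α1 : ℝ) := by
      rw [← Real.rpow_natCast R 2, ← Real.rpow_mul hR0.le]
      norm_num
    rw [h1]
    apply Real.rpow_le_rpow_of_nonpos (by positivity)
    · have : R^2 ≤ ‖y‖^2 := pow_le_pow_left₀ hR0.le hy 2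
      linarith
    · linarith
  have hLHSfact : (1+‖y1‖^2)^(-α1) * (1+‖y2‖^2)^(-(2:ℝ)) =
      (1+‖x-a‖^2)^(-α1) * (1+‖x-b‖^2)^(-(2:ℝ)) := rfl
  rcases lt_or_ge ‖y2‖ R with h2 | h2
  · -- case 1 : y2 in ball
    have h1' : R ≤ ‖y1‖ := by
      have := norm_sub_le y1 y2  -- wrong direction; use triangle
      have h := norm_le_norm_add_norm_sub' y1 y2
      -- ‖y1‖ ≥ ‖y1 - y2‖ - ‖y2‖
      have : ‖y1 - y2‖ - ‖y2‖ ≤ ‖y1‖ := by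
        have := norm_sub_norm_le y1 y2  -- |‖y1‖ - ‖y2‖| facts
        have h3 := norm_sub_le y1 (y1 - y2)
        simp only [sub_sub_cancel] at h3
        linarith
      rw [hy12] at this
      linarith
    have hmem : x - b ∈ ball (0:E4) R := mem_ball_zero_iff.2 h2
    rw [Set.indicator_of_mem hmem]
    have : (1+‖y1‖^2)^(-α1) ≤ R^(-(2*α1)) := hkey y1 h1'
    have hmain : (1+‖y1‖^2)^(-α1) * (1+‖y2‖^2)^(-(2:ℝ)) ≤
        R^(-(2*α1)) * (1+‖(x-b)‖^2)^(-(2:ℝ)) := by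
      apply mul_le_mul_of_nonneg_right this (Real.rpow_nonneg (hq1 _).le _)
    calc (1+‖x-a‖^2)^(-α1) * (1+‖x-b‖^2)^(-(2:ℝ))
        ≤ R^(-(2*α1)) * (1+‖x-b‖^2)^(-(2:ℝ)) := hmain
      _ ≤ _ := by
          have := add_nonneg hT3 hT4
          have h5 := hT2
          linarith
  · rcases lt_or_ge ‖y1‖ R with h1' | h1'
    · -- case 2 : y1 in ball, y2 outside
      have hq12 : (1:ℝ)+‖y1‖^2 ≤ 1+‖y2‖^2 := by
        have : ‖y1‖^2 ≤ ‖y2‖^2 := pow_le_pow_left₀ (norm_nonneg _) (le_of_lt (lt_of_lt_of_le h1' h2)) 2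
        linarith
      have hsplit : (1+‖y2‖^2)^(-(2:ℝ)) = (1+‖y2‖^2)^(-α1) * (1+‖y2‖^2)^(-(2-α1)) := by
        rw [← Real.rpow_add (hq1 _)]
        congr 1
        ring
      have hb1 : (1+‖y2‖^2)^(-α1) ≤ R^(-(2*α1)) := hkey y2 h2
      have hb2 : (1+‖y2‖^2)^(-(2-α1)) ≤ (1+‖y1‖^2)^(-(2-α1)) :=
        Real.rpow_le_rpow_of_nonpos (hq1 _) hq12 (by linarith)
      have hmem : x - a ∈ ball (0:E4) R := mem_ball_zero_iff.2 h1'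
      rw [Set.indicator_of_mem hmem]
      have hmain : (1+‖y1‖^2)^(-α1) * (1+‖y2‖^2)^(-(2:ℝ)) ≤
          R^(-(2*α1)) * (1+‖y1‖^2)^(-(2:ℝ)) := by
        rw [hsplit]
        have e1 : (1+‖y1‖^2)^(-α1) * ((1+‖y2‖^2)^(-α1) * (1+‖y2‖^2)^(-(2-α1)))
            ≤ (1+‖y1‖^2)^(-α1) * (R^(-(2*α1)) * (1+‖y1‖^2)^(-(2-α1))) := by
          apply mul_le_mul_of_nonneg_left _ (Real.rpow_nonneg (hq1 _).le _)
          exact mul_le_mul hb1 hb2 (Real.rpow_nonneg (hq1 _).le _) hce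
        calc (1+‖y1‖^2)^(-α1) * ((1+‖y2‖^2)^(-α1) * (1+‖y2‖^2)^(-(2-α1))) ≤
            (1+‖y1‖^2)^(-α1) * (R^(-(2*α1)) * (1+‖y1‖^2)^(-(2-α1))) := e1
          _ = R^(-(2*α1)) * ((1+‖y1‖^2)^(-α1) * (1+‖y1‖^2)^(-(2-α1))) := by ring
          _ = R^(-(2*α1)) * (1+‖y1‖^2)^(-(2:ℝ)) := by
              have hx : (1+‖y1‖^2)^(-α1) * (1+‖y1‖^2)^(-(2-α1)) = (1+‖y1‖^2)^(-(2:ℝ)) := by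
                rw [← Real.rpow_add (hq1 _)]
                congr 1
                ring
              rw [hx]
      calc (1+‖x-a‖^2)^(-α1) * (1+‖x-b‖^2)^(-(2:ℝ))
          ≤ R^(-(2*α1)) * (1+‖x-a‖^2)^(-(2:ℝ)) := hmain
        _ ≤ _ := by
            have := add_nonneg hT3 hT4
            linarith
    · -- case 3 : both outside
      rcases le_total ‖y1‖ ‖y2‖ with h12 | h21
      · have hq12 : (1:ℝ)+‖y1‖^2 ≤ 1+‖y2‖^2 := by
          have : ‖y1‖^2 ≤ ‖y2‖^2 := pow_le_pow_left₀ (norm_nonneg _) h12 2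
          linarith
        have hb : (1+‖y2‖^2)^(-(2:ℝ)) ≤ (1+‖y1‖^2)^(-(2:ℝ)) :=
          Real.rpow_le_rpow_of_nonpos (hq1 _) hq12 (by norm_num)
        have hmem : x - a ∈ {y : E4 | R ≤ ‖y‖} := h1'
        rw [Set.indicator_of_mem hmem]
        have hmain : (1+‖y1‖^2)^(-α1) * (1+‖y2‖^2)^(-(2:ℝ)) ≤ (1+‖y1‖^2)^(-(α1+2):ℝ) := by
          calc (1+‖y1‖^2)^(-α1) * (1+‖y2‖^2)^(-(2:ℝ))
              ≤ (1+‖y1‖^2)^(-α1) * (1+‖y1‖^2)^(-(2:ℝ)) :=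
                mul_le_mul_of_nonneg_left hb (Real.rpow_nonneg (hq1 _).le _)
            _ = (1+‖y1‖^2)^(-(α1+2):ℝ) := by
                rw [← Real.rpow_add (hq1 _)]
                congr 1
                ring
        calc (1+‖x-a‖^2)^(-α1) * (1+‖x-b‖^2)^(-(2:ℝ))
            ≤ (1+‖x-a‖^2)^(-(α1+2):ℝ) := hmain
          _ ≤ _ := by linarith
      · have hq21 : (1:ℝ)+‖y2‖^2 ≤ 1+‖y1‖^2 := by
          have : ‖y2‖^2 ≤ ‖y1‖^2 := pow_le_pow_left₀ (norm_nonneg _) h21 2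
          linarith
        have hb : (1+‖y1‖^2)^(-α1) ≤ (1+‖y2‖^2)^(-α1) :=
          Real.rpow_le_rpow_of_nonpos (hq1 _) hq21 (by linarith)
        have hmem : x - b ∈ {y : E4 | R ≤ ‖y‖} := h2
        rw [Set.indicator_of_mem hmem]
        have hmain : (1+‖y1‖^2)^(-α1) * (1+‖y2‖^2)^(-(2:ℝ)) ≤ (1+‖y2‖^2)^(-(α1+2):ℝ) := by
          calc (1+‖y1‖^2)^(-α1) * (1+‖y2‖^2)^(-(2:ℝ))
              ≤ (1+‖y2‖^2)^(-α1) * (1+‖y2‖^2)^(-(2:ℝ)) :=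
                mul_le_mul_of_nonneg_right hb (Real.rpow_nonneg (hq1 _).le _)
            _ = (1+‖y2‖^2)^(-(α1+2):ℝ) := by
                rw [← Real.rpow_add (hq1 _)]
                congr 1
                ring
        calc (1+‖x-a‖^2)^(-α1) * (1+‖x-b‖^2)^(-(2:ℝ))
            ≤ (1+‖x-b‖^2)^(-(α1+2):ℝ) := hmain
          _ ≤ _ := by linarith

end Aux

set_option maxHeartbeats 2000000 in
/-- Interaction estimate between two translated algebraically decaying profiles,
borderline case `α₂ = 2`: the integral is `O(t^{-2α₁} log t)`. -/
theorem interaction_estimate_case_three (f1 f2 : E4 → ℝ)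
    (hf1 : Continuous f1) (hf2 : Continuous f2) (C : ℝ)
    (hC : ∀ x : E4, |f1 x| ≤ C * Real.sqrt (1 + ‖x‖ ^ 2) ^ (-2 : ℤ)
      ∧ |f2 x| ≤ C * Real.sqrt (1 + ‖x‖ ^ 2) ^ (-2 : ℤ))
    (v1 v2 : E4) (hv : v1 ≠ v2)
    (α1 : ℝ) (hα1 : 0 < α1) (hα1' : α1 ≤ 2) :
    ∃ T0 > 0, ∃ C' > 0, ∀ t ≥ T0,
      (∫ x : E4, |f1 (x - t • v1)| ^ α1 * |f2 (x - t • v2)| ^ (2 : ℝ))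
        ≤ C' * t ^ (-(2 * α1)) * Real.log t := by
  classical
  set κ : ℝ := ‖v1 - v2‖ with hκdef
  have hκ : 0 < κ := norm_pos_iff.2 (sub_ne_zero.2 hv)
  set B : ℝ := max C 1 with hBdef
  have hB1 : (1:ℝ) ≤ B := le_max_right _ _
  have hB0 : (0:ℝ) < B := by linarith
  -- pointwise bound on f1, f2
  have hzpow : ∀ y : E4, Real.sqrt (1 + ‖y‖ ^ 2) ^ (-2 : ℤ) = (1 + ‖y‖^2)⁻¹ := by
    intro y
    rw [zpow_neg]
    congr 1
    rw [zpow_two]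
    exact Real.mul_self_sqrt (by positivity)
  have hBf1 : ∀ y : E4, |f1 y| ≤ B * (1 + ‖y‖^2)⁻¹ := by
    intro y
    refine (hC y).1.trans ?_
    rw [hzpow]
    apply mul_le_mul_of_nonneg_right (le_max_left _ _) (by positivity)
  have hBf2 : ∀ y : E4, |f2 y| ≤ B * (1 + ‖y‖^2)⁻¹ := by
    intro y
    refine (hC y).2.trans ?_
    rw [hzpow]
    apply mul_le_mul_of_nonneg_right (le_max_left _ _) (by positivity)
  set cv : ℝ := (volume (ball (0:E4) 1)).toReal with hcvdef
  have hcv : 0 < cv :=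
    ENNReal.toReal_pos (measure_ball_pos volume 0 one_pos).ne' measure_ball_lt_top.ne
  set M : ℝ := B ^ α1 * B ^ (2:ℝ) with hMdef
  have hM : 0 < M := mul_pos (Real.rpow_pos_of_pos hB0 _) (Real.rpow_pos_of_pos hB0 _)
  refine ⟨max (max 3 (4/κ)) κ, by positivity, M * (4*cv) * ((κ/2) ^ (-(2*α1))) * (8 + 1/α1),
    by positivity, fun t ht => ?_⟩
  have ht3 : (3:ℝ) ≤ t := le_trans (le_trans (le_max_left _ _) (le_max_left _ _)) ht
  have ht4κ : 4/κ ≤ t := le_trans (le_trans (le_max_right _ _) (le_max_left _ _)) ht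
  have htκ : κ ≤ t := le_trans (le_max_right _ _) ht
  have ht0 : (0:ℝ) < t := by linarith
  set R : ℝ := κ * t / 2 with hRdef
  have hR2 : (2:ℝ) ≤ R := by
    rw [hRdef]
    rw [div_le_iff₀ hκ] at ht4κ
    nlinarith
  have hR0 : (0:ℝ) < R := by linarith
  have hR1 : (1:ℝ) ≤ R := by linarith
  set a : E4 := t • v1 with hadef
  set b : E4 := t • v2 with hbdef
  have hab : ‖b - a‖ = 2 * R := by
    rw [hadef, hbdef, ← smul_sub, norm_smul, Real.norm_eq_abs, abs_of_pos ht0,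
      norm_sub_rev, ← hκdef, hRdef]
    ring
  -- the dominating function pieces
  set h1 : E4 → ℝ := (ball (0:E4) R).indicator (fun y : E4 => (1 + ‖y‖^2)^(-2:ℝ)) with h1def
  set h3 : E4 → ℝ := ({y : E4 | R ≤ ‖y‖}).indicator (fun y : E4 => (1 + ‖y‖^2)^(-(α1+2):ℝ))
    with h3def
  -- integrability
  have hcont2 : Continuous (fun y : E4 => (1 + ‖y‖^2)^(-2:ℝ)) := by
    apply Continuous.rpow_const (by continuity)
    intro y
    left
    positivity
  have ih1 : Integrable h1 := by
    rw [h1def]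
    apply IntegrableOn.integrable_indicator _ measurableSet_ball
    apply Measure.integrableOn_of_bounded measure_ball_lt_top.ne
      hcont2.aestronglyMeasurable (M := 1)
    filter_upwards with y
    rw [Real.norm_eq_abs, abs_of_nonneg (Real.rpow_nonneg (by positivity) _)]
    exact Real.rpow_le_one_of_one_le_of_nonpos (by nlinarith [sq_nonneg ‖y‖]) (by norm_num)
  have ih3 : Integrable h3 := by
    rw [h3def]
    apply Integrable.indicator _ (isClosed_le continuous_const continuous_norm).measurableSet
    have hint := integrable_rpow_neg_one_add_norm_sq (μ := (volume : Measure E4))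
      (r := 2*α1 + 4) (by
        rw [finrank_euclideanSpace_fin]
        push_cast
        linarith)
    have : ∀ y : E4, ((1:ℝ) + ‖y‖ ^ 2) ^ (-(2*α1+4)/2) = (1 + ‖y‖^2)^(-(α1+2):ℝ) := by
      intro y
      congr 1
      ring
    simpa only [this] using hint
  set c : ℝ := R ^ (-(2*α1)) with hcdef
  set g : E4 → ℝ := fun x =>
    M * (c * h1 (x - b) + c * h1 (x - a) + (h3 (x - a) + h3 (x - b))) with hgdef
  have ihg : Integrable g := by
    rw [hgdef]
    apply Integrable.const_mul
    exact (((ih1.comp_sub_right b).const_mul c).add ((ih1.comp_sub_right a).const_mul c)).add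
      ((ih3.comp_sub_right a).add (ih3.comp_sub_right b))
  -- pointwise comparison
  have hpt : ∀ x : E4, |f1 (x - t • v1)| ^ α1 * |f2 (x - t • v2)| ^ (2 : ℝ) ≤ g x := by
    intro x
    have e1 : |f1 (x - a)| ^ α1 ≤ B ^ α1 * (1 + ‖x - a‖^2)^(-α1) := by
      calc |f1 (x - a)| ^ α1 ≤ (B * (1 + ‖x - a‖^2)⁻¹) ^ α1 :=
            Real.rpow_le_rpow (abs_nonneg _) (hBf1 _) hα1.le
        _ = B ^ α1 * (1 + ‖x - a‖^2)^(-α1) := by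
            rw [Real.mul_rpow hB0.le (by positivity), ← Real.rpow_neg_one (1 + ‖x - a‖^2),
              ← Real.rpow_mul (by positivity), neg_one_mul]
    have e2 : |f2 (x - b)| ^ (2:ℝ) ≤ B ^ (2:ℝ) * (1 + ‖x - b‖^2)^(-(2:ℝ)) := by
      calc |f2 (x - b)| ^ (2:ℝ) ≤ (B * (1 + ‖x - b‖^2)⁻¹) ^ (2:ℝ) :=
            Real.rpow_le_rpow (abs_nonneg _) (hBf2 _) (by norm_num)
        _ = B ^ (2:ℝ) * (1 + ‖x - b‖^2)^(-(2:ℝ)) := by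
            rw [Real.mul_rpow hB0.le (by positivity), ← Real.rpow_neg_one (1 + ‖x - b‖^2),
              ← Real.rpow_mul (by positivity), neg_one_mul]
    have e3 : |f1 (x - a)| ^ α1 * |f2 (x - b)| ^ (2:ℝ) ≤
        M * ((1 + ‖x - a‖^2)^(-α1) * (1 + ‖x - b‖^2)^(-(2:ℝ))) := by
      have := mul_le_mul e1 e2 (Real.rpow_nonneg (abs_nonneg _) _)
        (by positivity)
      calc |f1 (x - a)| ^ α1 * |f2 (x - b)| ^ (2:ℝ)
          ≤ (B ^ α1 * (1 + ‖x - a‖^2)^(-α1)) * (B ^ (2:ℝ) * (1 + ‖x - b‖^2)^(-(2:ℝ))) := this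
        _ = M * ((1 + ‖x - a‖^2)^(-α1) * (1 + ‖x - b‖^2)^(-(2:ℝ))) := by
            rw [hMdef]; ring
    refine le_trans e3 ?_
    rw [hgdef]
    apply mul_le_mul_of_nonneg_left _ hM.le
    have := pointwise_bound α1 R hα1 hα1' hR0 a b hab x
    rw [h1def, h3def, hcdef]
    convert this using 2 <;> ring
  -- integral comparison
  have hint_le : (∫ x : E4, |f1 (x - t • v1)| ^ α1 * |f2 (x - t • v2)| ^ (2 : ℝ)) ≤ ∫ x, g x := by
    apply integral_mono_of_nonneg
    · filter_upwards with x
      positivity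
    · exact ihg
    · filter_upwards with x
      exact hpt x
  -- compute ∫ g
  have hintg : ∫ x, g x = M * (c * (∫ x, h1 x) + c * (∫ x, h1 x) + ((∫ x, h3 x) + (∫ x, h3 x))) := by
    have iA : Integrable (fun x : E4 => c * h1 (x - b)) := (ih1.comp_sub_right b).const_mul c
    have iB : Integrable (fun x : E4 => c * h1 (x - a)) := (ih1.comp_sub_right a).const_mul c
    have iC : Integrable (fun x : E4 => h3 (x - a)) := ih3.comp_sub_right a
    have iD : Integrable (fun x : E4 => h3 (x - b)) := ih3.comp_sub_right b
    have iAB : Integrable (fun x : E4 => c * h1 (x - b) + c * h1 (x - a)) := iA.add iB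
    have iCD : Integrable (fun x : E4 => h3 (x - a) + h3 (x - b)) := iC.add iD
    rw [hgdef]
    rw [integral_const_mul]
    congr 1
    rw [integral_add iAB iCD, integral_add iA iB, integral_add iC iD,
      integral_const_mul, integral_const_mul,
      integral_sub_right_eq_self h1 b, integral_sub_right_eq_self h1 a,
      integral_sub_right_eq_self h3 a, integral_sub_right_eq_self h3 b]
  -- bounds on the two integrals
  have hJ1 : ∫ x, h1 x ≤ 4 * cv * (2 * Real.log R) := J1_bound hR2
  have hJ3 : ∫ x, h3 x ≤ 4 * cv * (R^(-(2*α1)) / (2*α1)) := J2_bound hR1 hα1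
  have hJ1nn : 0 ≤ ∫ x, h1 x := by
    apply integral_nonneg
    intro y
    exact Set.indicator_nonneg (fun z _ => Real.rpow_nonneg (by positivity) _) y
  have hc0 : 0 < c := Real.rpow_pos_of_pos hR0 _
  -- final arithmetic
  have hlogt1 : (1:ℝ) ≤ Real.log t := by
    rw [Real.le_log_iff_exp_le ht0]
    calc Real.exp 1 ≤ 2.7182818286 := Real.exp_one_lt_d9.le
      _ ≤ 3 := by norm_num
      _ ≤ t := ht3
  have hlogR : Real.log R ≤ 2 * Real.log t := by
    have hRt2 : R ≤ t^2 := by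
      rw [hRdef]
      nlinarith
    calc Real.log R ≤ Real.log (t^2) := Real.log_le_log hR0 hRt2
      _ = 2 * Real.log t := by rw [Real.log_pow]; norm_num
  have hRsplit : c = (κ/2) ^ (-(2*α1)) * t ^ (-(2*α1)) := by
    rw [hcdef, hRdef, show κ * t / 2 = (κ/2) * t by ring,
      Real.mul_rpow (by positivity) ht0.le]
  calc (∫ x : E4, |f1 (x - t • v1)| ^ α1 * |f2 (x - t • v2)| ^ (2 : ℝ))
      ≤ ∫ x, g x := hint_le
    _ = M * (c * (∫ x, h1 x) + c * (∫ x, h1 x) + ((∫ x, h3 x) + (∫ x, h3 x))) := hintg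
    _ ≤ M * (c * (4 * cv * (2 * Real.log R)) + c * (4 * cv * (2 * Real.log R))
        + ((4 * cv * (c / (2*α1))) + (4 * cv * (c / (2*α1))))) := by
        apply mul_le_mul_of_nonneg_left _ hM.le
        have b1 := mul_le_mul_of_nonneg_left hJ1 hc0.le
        rw [← hcdef] at hJ3
        linarith
    _ = M * (4*cv) * c * (4 * Real.log R + 1/α1) := by
        field_simp
        ring
    _ ≤ M * (4*cv) * c * ((8 + 1/α1) * Real.log t) := by
        apply mul_le_mul_of_nonneg_left _ (by positivity)
        have h1α : 0 < 1/α1 := by positivity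
        have : 1/α1 ≤ (1/α1) * Real.log t := by
          nlinarith
        nlinarith
    _ = M * (4*cv) * ((κ/2) ^ (-(2*α1))) * (8 + 1/α1) * t ^ (-(2 * α1)) * Real.log t := by
        rw [hRsplit]
        ring
end
end

section
/- Let $\psi : \mathbb{R}^4 \to \mathbb{R}$ be continuous with $|\psi(x)| \le C\langle x\rangle^{-2}$, and let $\xi : [0,\infty)\to[0,1]$ be continuous with support in $[0,2]$. Let $\ell, \ell' \in (-1,1)$ with $\ell \ne \ell'$, let $e_1$ be the first standard basis vector, and let $0 < \sigma \le \frac{1}{10}|\ell - \ell'|$. Define $\Psi(t,x) = \psi\big(\frac{x_1 - \ell t}{\sqrt{1-\ell^2}}, \bar x\big)$, $\Psi'(t,x) = \psi\big(\frac{x_1 - \ell' t}{\sqrt{1-\ell'^2}}, \bar x\big)$, and $\xi_\ell(t,x) = \xi\big((\sigma t)^{-1}\big|\big(\frac{x_1-\ell t}{\sqrt{1-\ell^2}},\bar x\big)\big|\big)$. Then there exist $T_0, C' > 0$ such that for all $t \ge T_0$, $\left| \int_{\mathbb{R}^4} \Psi'(t,x)\,\Psi(t,x)\,\xi_\ell(t,x)\,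 dx \right| \le C'$. -/
noncomputable section

open MeasureTheory

/-- The Lorentz-boosted and translated coordinates:
`boost ℓ t x = ((x₁ - ℓt)/√(1-ℓ²), x̄)`. -/
def boost (ℓ t : ℝ) (x : E4) : E4 :=
  (WithLp.equiv 2 (Fin 4 → ℝ)).symm
    (fun i => if i = 0 then (x 0 - ℓ * t) / Real.sqrt (1 - ℓ ^ 2) else x i)

lemma abs_le_of_sq_le_sq'' (a b : ℝ) (hb : 0 ≤ b) (h : a ^ 2 ≤ b ^ 2) : |a| ≤ b := by
  rw [← Real.sqrt_sq_eq_abs, ← Real.sqrt_sq hb]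
  exact Real.sqrt_le_sqrt h

lemma norm_sq_E4 (y : E4) : ‖y‖ ^ 2 = (y 0) ^ 2 + (y 1) ^ 2 + (y 2) ^ 2 + (y 3) ^ 2 := by
  rw [EuclideanSpace.norm_eq, Real.sq_sqrt (by positivity)]
  simp [Fin.sum_univ_four, sq_abs]

lemma scale_abs_le (u s B : ℝ) (hs0 : 0 < s) (hs1 : s ≤ 1) (hB : 0 ≤ B)
    (hu : |u / s| ≤ B) : |u| ≤ B := by
  have e : |u| = |u / s| * s := by
    rw [abs_div, abs_of_pos hs0]
    field_simp
  rw [e]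
  nlinarith [abs_nonneg (u / s)]

lemma scale_sq_le (u s : ℝ) (hs0 : 0 < s) (hs1 : s ≤ 1) : u ^ 2 ≤ (u / s) ^ 2 := by
  have e : (u / s) ^ 2 * s ^ 2 = u ^ 2 := by field_simp
  have h2 : s ^ 2 ≤ 1 := by nlinarith
  have h3 : 0 ≤ (u / s) ^ 2 * (1 - s ^ 2) :=
    mul_nonneg (sq_nonneg _) (by linarith)
  nlinarith [e, h3]

lemma scale_abs_le' (u s : ℝ) (hs0 : 0 < s) (hs1 : s ≤ 1) : |u| ≤ |u / s| := by
  rw [abs_div, abs_of_pos hs0, le_div_iff₀ hs0]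
  nlinarith [abs_nonneg u]

set_option maxHeartbeats 1000000 in
/-- The cross term between two boosted copies of the slowly decaying kernel function,
cut off at scale `σt` around the first soliton center, is uniformly bounded in time. -/
theorem boosted_cross_term_bounded (ψ : E4 → ℝ) (hc : Continuous ψ) (C : ℝ)
    (hψ : ∀ x : E4, |ψ x| ≤ C * Real.sqrt (1 + ‖x‖ ^ 2) ^ (-2 : ℤ))
    (ξ : ℝ → ℝ) (hξc : Continuous ξ) (hξ01 : ∀ r : ℝ, ξ r ∈ Set.Icc (0 : ℝ) 1)
    (hsupp : ∀ r : ℝ, 2 < r → ξ r = 0)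
    (ℓ ℓ' σ : ℝ) (hℓ : ℓ ∈ Set.Ioo (-1 : ℝ) 1) (hℓ' : ℓ' ∈ Set.Ioo (-1 : ℝ) 1)
    (hne : ℓ ≠ ℓ') (hσ0 : 0 < σ) (hσ : σ ≤ |ℓ - ℓ'| / 10) :
    ∃ T0 > 0, ∃ C' > 0, ∀ t ≥ T0,
      |∫ x : E4, ψ (boost ℓ' t x) * ψ (boost ℓ t x) * ξ (‖boost ℓ t x‖ / (σ * t))|
        ≤ C' := by
  obtain ⟨hℓ1, hℓ2⟩ := hℓ
  obtain ⟨hℓ'1, hℓ'2⟩ := hℓ'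
  set d := |ℓ - ℓ'| with hd_def
  have hd : 0 < d := abs_pos.mpr (sub_ne_zero.mpr hne)
  have hs2 : 0 < 1 - ℓ ^ 2 := by nlinarith
  have hs'2 : 0 < 1 - ℓ' ^ 2 := by nlinarith
  set s := Real.sqrt (1 - ℓ ^ 2) with hs_def
  set s' := Real.sqrt (1 - ℓ' ^ 2) with hs'_def
  have hs0 : 0 < s := Real.sqrt_pos.mpr hs2
  have hs'0 : 0 < s' := Real.sqrt_pos.mpr hs'2
  have hs1 : s ≤ 1 :=
    (Real.sqrt_le_sqrt (by nlinarith : 1 - ℓ ^ 2 ≤ 1)).trans_eq Real.sqrt_one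
  have hs'1 : s' ≤ 1 :=
    (Real.sqrt_le_sqrt (by nlinarith : 1 - ℓ' ^ 2 ≤ 1)).trans_eq Real.sqrt_one
  -- rewrite the decay hypothesis
  have hψ' : ∀ x : E4, |ψ x| ≤ C * (1 + ‖x‖ ^ 2)⁻¹ := by
    intro x
    have h0 : (0 : ℝ) ≤ 1 + ‖x‖ ^ 2 := by positivity
    have : Real.sqrt (1 + ‖x‖ ^ 2) ^ (-2 : ℤ) = (1 + ‖x‖ ^ 2)⁻¹ := by
      rw [show ((-2 : ℤ)) = -(2 : ℤ) from rfl, zpow_neg, zpow_two,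
        Real.mul_self_sqrt h0]
    rw [← this]; exact hψ x
  have hC : 0 ≤ C := by
    by_contra h
    push_neg at h
    have hv : (0 : ℝ) < (1 + ‖(0 : E4)‖ ^ 2)⁻¹ := by positivity
    have h2 := mul_neg_of_neg_of_pos h hv
    linarith [abs_nonneg (ψ 0), hψ' 0]
  set v := (volume (Metric.ball (0 : E4) 1)).toReal with hv_def
  have hv : 0 ≤ v := ENNReal.toReal_nonneg
  set K := C ^ 2 * (25 / (16 * d ^ 2)) with hK_def
  have hK0 : 0 ≤ K := by positivity
  refine ⟨1, one_pos, 36 * K * v * σ ^ 2 + 1, by positivity, ?_⟩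
  intro t ht
  have ht0 : 0 < t := lt_of_lt_of_le one_pos ht
  have htne : t ≠ 0 := ne_of_gt ht0
  set a : E4 := EuclideanSpace.single 0 (ℓ * t) with ha_def
  set R := 3 * σ * t with hR_def
  have hR0 : 0 ≤ R := by positivity
  set G : E4 → ℝ := fun x =>
    (K / t ^ 2) * Set.indicator (Metric.closedBall a R) (fun x => (1 + ‖x - a‖ ^ 2)⁻¹) x
    with hG_def
  -- coordinates of x - a
  have hxa : ∀ x : E4, (x - a) 0 = x 0 - ℓ * t ∧ (x - a) 1 = x 1 ∧ (x - a) 2 = x 2 ∧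
      (x - a) 3 = x 3 := by
    intro x
    refine ⟨?_, ?_, ?_, ?_⟩ <;>
      simp [ha_def, EuclideanSpace.single_apply]
  -- coordinates of boost
  have hbc : ∀ (l : ℝ) (x : E4), boost l t x 0 = (x 0 - l * t) / Real.sqrt (1 - l ^ 2) ∧
      boost l t x 1 = x 1 ∧ boost l t x 2 = x 2 ∧ boost l t x 3 = x 3 := by
    intro l x
    refine ⟨?_, ?_, ?_, ?_⟩ <;> simp [boost]
  -- pointwise bound
  have hpoint : ∀ x : E4,
      |ψ (boost ℓ' t x) * ψ (boost ℓ t x) * ξ (‖boost ℓ t x‖ / (σ * t))| ≤ G x := by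
    intro x
    have hGnn : 0 ≤ G x := by
      apply mul_nonneg (by positivity)
      exact Set.indicator_nonneg (fun y _ => by positivity) x
    by_cases hx : ‖boost ℓ t x‖ ≤ 2 * σ * t
    · obtain ⟨hb0, hb1, hb2, hb3⟩ := hbc ℓ x
      obtain ⟨hb'0, hb'1, hb'2, hb'3⟩ := hbc ℓ' x
      obtain ⟨hxa0, hxa1, hxa2, hxa3⟩ := hxa x
      have hnb := norm_sq_E4 (boost ℓ t x)
      have hnb' := norm_sq_E4 (boost ℓ' t x)
      have hnxa := norm_sq_E4 (x - a)
      rw [hb0, hb1, hb2, hb3] at hnb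
      rw [hb'0, hb'1, hb'2, hb'3] at hnb'
      rw [hxa0, hxa1, hxa2, hxa3] at hnxa
      set b := boost ℓ t x with hb_def
      set b' := boost ℓ' t x with hb'_def
      have hbsq : ‖b‖ ^ 2 ≤ (2 * σ * t) ^ 2 := by
        rw [← sq_abs ‖b‖, abs_of_nonneg (norm_nonneg b)]
        exact pow_le_pow_left₀ (norm_nonneg b) hx 2
      -- |x 0 - ℓ t| ≤ 2 σ t
      have hb0abs : |(x 0 - ℓ * t) / s| ≤ 2 * σ * t := by
        apply abs_le_of_sq_le_sq'' _ _ (by positivity)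
        linarith [hnb, sq_nonneg (x 1), sq_nonneg (x 2), sq_nonneg (x 3)]
      have h1 : |x 0 - ℓ * t| ≤ 2 * σ * t :=
        scale_abs_le _ _ _ hs0 hs1 (by positivity) hb0abs
      have h1sq : (x 0 - ℓ * t) ^ 2 ≤ (2 * σ * t) ^ 2 := by
        rw [← sq_abs (x 0 - ℓ * t)]
        exact pow_le_pow_left₀ (abs_nonneg _) h1 2
      -- ‖x - a‖² ≤ ‖b‖² and membership in ball
      have h3 : ‖x - a‖ ^ 2 ≤ ‖b‖ ^ 2 := by
        have := scale_sq_le (x 0 - ℓ * t) s hs0 hs1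
        linarith [hnb, hnxa]
      have h2 : x ∈ Metric.closedBall a R := by
        rw [Metric.mem_closedBall, dist_eq_norm]
        have hsq : ‖x - a‖ ^ 2 ≤ R ^ 2 := by
          have hsum : (x 1) ^ 2 + (x 2) ^ 2 + (x 3) ^ 2 ≤ (2 * σ * t) ^ 2 := by
            linarith [hnb, sq_nonneg ((x 0 - ℓ * t) / s), hbsq]
          have hRsq : (2 * σ * t) ^ 2 + (2 * σ * t) ^ 2 ≤ R ^ 2 := by
            rw [hR_def]
            have : (0 : ℝ) ≤ (σ * t) ^ 2 := sq_nonneg _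
            linarith [sq_nonneg (σ * t)]
          linarith [hnxa]
        have := abs_le_of_sq_le_sq'' ‖x - a‖ R hR0 hsq
        rwa [abs_of_nonneg (norm_nonneg _)] at this
      -- lower bound on ‖b'‖
      have h4 : (4 / 5) * d * t ≤ |x 0 - ℓ' * t| := by
        have key : d * t ≤ |x 0 - ℓ' * t| + |x 0 - ℓ * t| := by
          have e1 : d * t = |(x 0 - ℓ' * t) - (x 0 - ℓ * t)| := by
            rw [show (x 0 - ℓ' * t) - (x 0 - ℓ * t) = (ℓ - ℓ') * t by ring,
              abs_mul, abs_of_pos ht0, hd_def]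
          rw [e1, sub_eq_add_neg]
          exact (abs_add_le _ _).trans (by rw [abs_neg])
        have hprod : σ * t ≤ d / 10 * t := mul_le_mul_of_nonneg_right hσ ht0.le
        linarith
      have h5 : (4 / 5) * d * t ≤ ‖b'‖ := by
        have h51 : |x 0 - ℓ' * t| ≤ |(x 0 - ℓ' * t) / s'| :=
          scale_abs_le' _ _ hs'0 hs'1
        have h52 : |(x 0 - ℓ' * t) / s'| ≤ ‖b'‖ := by
          apply abs_le_of_sq_le_sq'' _ _ (norm_nonneg _)
          linarith [hnb', sq_nonneg (x 1), sq_nonneg (x 2), sq_nonneg (x 3)]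
        linarith
      have h5inv : (1 + ‖b'‖ ^ 2)⁻¹ ≤ 25 / (16 * d ^ 2 * t ^ 2) := by
        have hlb : 16 / 25 * d ^ 2 * t ^ 2 ≤ 1 + ‖b'‖ ^ 2 := by
          have h5sq : ((4 / 5) * d * t) ^ 2 ≤ ‖b'‖ ^ 2 :=
            pow_le_pow_left₀ (by positivity) h5 2
          linarith [h5sq]
        calc (1 + ‖b'‖ ^ 2)⁻¹ ≤ (16 / 25 * d ^ 2 * t ^ 2)⁻¹ :=
              inv_anti₀ (by positivity) hlb
          _ = 25 / (16 * d ^ 2 * t ^ 2) := by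
              rw [inv_eq_one_div, div_eq_div_iff (by positivity) (by positivity)]
              ring
      have h6 : (1 + ‖b‖ ^ 2)⁻¹ ≤ (1 + ‖x - a‖ ^ 2)⁻¹ :=
        inv_anti₀ (by positivity) (by linarith)
      -- assemble
      set r := ‖b‖ / (σ * t) with hr_def
      have hξx : |ξ r| ≤ 1 := abs_le.mpr ⟨by linarith [(hξ01 r).1], (hξ01 r).2⟩
      have hb'2 : |ψ b'| ≤ C * (25 / (16 * d ^ 2 * t ^ 2)) :=
        (hψ' b').trans (mul_le_mul_of_nonneg_left h5inv hC)
      have hb2 : |ψ b| ≤ C * (1 + ‖x - a‖ ^ 2)⁻¹ :=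
        (hψ' b).trans (mul_le_mul_of_nonneg_left h6 hC)
      have hfin : |ψ b' * ψ b * ξ r| ≤
          (C * (25 / (16 * d ^ 2 * t ^ 2))) * (C * (1 + ‖x - a‖ ^ 2)⁻¹) * 1 := by
        rw [abs_mul, abs_mul]
        apply mul_le_mul _ hξx (abs_nonneg _) (by positivity)
        exact mul_le_mul hb'2 hb2 (abs_nonneg _) (by positivity)
      refine hfin.trans (le_of_eq ?_)
      rw [hG_def]
      simp only [Set.indicator_of_mem h2]
      rw [hK_def]
      field_simp
    · have hz : ξ (‖boost ℓ t x‖ / (σ * t)) = 0 := by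
        apply hsupp
        rw [lt_div_iff₀ (by positivity)]
        push_neg at hx
        linarith
      rw [hz, mul_zero, abs_zero]
      exact hGnn
  -- integrability of the dominating function
  have hGint : Integrable G := by
    apply Integrable.const_mul
    rw [integrable_indicator_iff measurableSet_closedBall]
    apply ContinuousOn.integrableOn_compact (isCompact_closedBall a R)
    apply Continuous.continuousOn
    have h1 : Continuous fun x : E4 => 1 + ‖x - a‖ ^ 2 := by
      continuity
    exact h1.inv₀ (fun x => by positivity)
  -- bound the integral of the indicator
  have hI : (∫ x : E4, Set.indicator (Metric.closedBall a R)
      (fun x => (1 + ‖x - a‖ ^ 2)⁻¹) x) ≤ 4 * (v * (R * R)) := by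
    have step1 : (fun x : E4 => Set.indicator (Metric.closedBall a R)
        (fun x => (1 + ‖x - a‖ ^ 2)⁻¹) x) = fun x : E4 =>
        (fun z : E4 => Set.indicator (Metric.closedBall (0 : E4) R)
          (fun z => (1 + ‖z‖ ^ 2)⁻¹) z) (x - a) := by
      funext x
      show Set.indicator (Metric.closedBall a R) (fun x => (1 + ‖x - a‖ ^ 2)⁻¹) x
        = Set.indicator (Metric.closedBall (0 : E4) R) (fun z => (1 + ‖z‖ ^ 2)⁻¹) (x - a)
      by_cases hx : x ∈ Metric.closedBall a R
      · have hx' : x - a ∈ Metric.closedBall (0 : E4) R := by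
          rw [Metric.mem_closedBall] at hx ⊢
          rw [dist_zero_right, ← dist_eq_norm]
          exact hx
        rw [Set.indicator_of_mem hx, Set.indicator_of_mem hx']
      · have hx' : x - a ∉ Metric.closedBall (0 : E4) R := by
          rw [Metric.mem_closedBall] at hx ⊢
          rw [dist_zero_right, ← dist_eq_norm]
          exact hx
        rw [Set.indicator_of_notMem hx, Set.indicator_of_notMem hx']
    rw [step1, integral_sub_right_eq_self]
    set h : ℝ → ℝ := fun r => Set.indicator (Set.Icc 0 R) (fun r => (1 + r ^ 2)⁻¹) r
      with hh_def
    have step2 : (fun z : E4 => Set.indicator (Metric.closedBall (0 : E4) R)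
        (fun z => (1 + ‖z‖ ^ 2)⁻¹) z) = fun z : E4 => h ‖z‖ := by
      funext z
      show Set.indicator (Metric.closedBall (0 : E4) R) (fun z => (1 + ‖z‖ ^ 2)⁻¹) z = h ‖z‖
      simp only [hh_def]
      by_cases hz : ‖z‖ ≤ R
      · have h1 : z ∈ Metric.closedBall (0 : E4) R := by
          rw [Metric.mem_closedBall, dist_zero_right]; exact hz
        have h2 : ‖z‖ ∈ Set.Icc (0 : ℝ) R := ⟨norm_nonneg _, hz⟩
        rw [Set.indicator_of_mem h1, Set.indicator_of_mem h2]
      · have h1 : z ∉ Metric.closedBall (0 : E4) R := by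
          rw [Metric.mem_closedBall, dist_zero_right]; exact hz
        have h2 : ‖z‖ ∉ Set.Icc (0 : ℝ) R := fun hc => hz hc.2
        rw [Set.indicator_of_notMem h1, Set.indicator_of_notMem h2]
    rw [step2, integral_fun_norm_addHaar (volume : Measure E4) h]
    have hdim : Module.finrank ℝ E4 = 4 := by simp
    rw [hdim]
    have hJ1 : (∫ y in Set.Ioi (0 : ℝ), y ^ (4 - 1) • h y) ≤ R * R := by
      have e1 : ∀ y ∈ Set.Ioi (0 : ℝ), y ^ (4 - 1) • h y =
          Set.indicator (Set.Icc 0 R) (fun y => y ^ 3 * (1 + y ^ 2)⁻¹) y := by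
        intro y _
        rw [hh_def, smul_eq_mul]
        by_cases hy : y ∈ Set.Icc (0 : ℝ) R
        · simp [Set.indicator_of_mem hy]
        · simp [Set.indicator_of_notMem hy]
      rw [setIntegral_congr_fun measurableSet_Ioi e1,
        setIntegral_indicator measurableSet_Icc]
      have hset : Set.Ioi (0 : ℝ) ∩ Set.Icc 0 R = Set.Ioc 0 R := by
        ext y
        simp only [Set.mem_inter_iff, Set.mem_Ioi, Set.mem_Icc, Set.mem_Ioc]
        constructor
        · rintro ⟨h1, _, h3⟩; exact ⟨h1, h3⟩
        · rintro ⟨h1, h2⟩; exact ⟨h1, h1.le, h2⟩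
      rw [hset]
      have hcont : Continuous fun y : ℝ => y ^ 3 * (1 + y ^ 2)⁻¹ := by
        apply Continuous.mul (continuous_pow 3)
        exact (continuous_const.add (continuous_pow 2)).inv₀ (fun y => (by positivity : (0:ℝ) < 1 + y ^ 2).ne')
      calc (∫ y in Set.Ioc (0 : ℝ) R, y ^ 3 * (1 + y ^ 2)⁻¹)
          ≤ ∫ _ in Set.Ioc (0 : ℝ) R, R := by
            apply setIntegral_mono_on hcont.integrableOn_Ioc
              (integrableOn_const measure_Ioc_lt_top.ne) measurableSet_Ioc
            intro y hy
            obtain ⟨hy1, hy2⟩ := hy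
            have e : y ^ 3 * (1 + y ^ 2)⁻¹ ≤ y := by
              rw [mul_inv_le_iff₀ (by positivity)]
              nlinarith
            linarith
        _ = R * R := by
            rw [setIntegral_const, measureReal_def, Real.volume_Ioc, smul_eq_mul, sub_zero,
              ENNReal.toReal_ofReal hR0]
    calc (4 : ℕ) • v • ∫ y in Set.Ioi (0 : ℝ), y ^ (4 - 1) • h y
        = 4 * (v * ∫ y in Set.Ioi (0 : ℝ), y ^ (4 - 1) • h y) := by
          rw [nsmul_eq_mul, smul_eq_mul]; norm_num
      _ ≤ 4 * (v * (R * R)) := by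
          have := mul_le_mul_of_nonneg_left hJ1 hv
          linarith
  -- put everything together
  calc |∫ x : E4, ψ (boost ℓ' t x) * ψ (boost ℓ t x) * ξ (‖boost ℓ t x‖ / (σ * t))|
      ≤ ∫ x : E4, |ψ (boost ℓ' t x) * ψ (boost ℓ t x) * ξ (‖boost ℓ t x‖ / (σ * t))| := by
        simpa only [Real.norm_eq_abs] using norm_integral_le_integral_norm (μ := volume)
          (fun x : E4 => ψ (boost ℓ' t x) * ψ (boost ℓ t x) * ξ (‖boost ℓ t x‖ / (σ * t)))
    _ ≤ ∫ x : E4, G x := integral_mono_of_nonneg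
        (Filter.Eventually.of_forall fun x => abs_nonneg _) hGint
        (Filter.Eventually.of_forall hpoint)
    _ = (K / t ^ 2) * ∫ x : E4, Set.indicator (Metric.closedBall a R)
        (fun x => (1 + ‖x - a‖ ^ 2)⁻¹) x := by
        rw [hG_def]; exact integral_const_mul _ _
    _ ≤ (K / t ^ 2) * (4 * (v * (R * R))) :=
        mul_le_mul_of_nonneg_left hI (by positivity)
    _ = 36 * K * v * σ ^ 2 := by
        rw [hR_def]; field_simp; ring
    _ ≤ 36 * K * v * σ ^ 2 + 1 := by linarith
end
end

section
/- Let $Q : \mathbb{R}^4 \to \mathbb{R}$ be continuous with $|Q(x)| \le C\langle x\rangle^{-3}$ and suppose $|Q(x) - x_4/|x|^4| \le C|x|^{-4}$ for $|x| > 1$. Let $\ell_1 \ne \ell_2 \in (-1,1)$ and define $Q_n(t,x) = Q\big(\frac{x_1 - \ell_n t}{\sqrt{1-\ell_n^2}}, \bar x\big)$ for $n = 1, 2$. Then there exist $T_0, C' > 0$ such that for all $t \ge T_0$, $\|Q_1(t,\cdot)^2 \, Q_2(t,\cdot)\|_{L^2(\mathbb{R}^4)} \le C' t^{-4}$. -/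
set_option maxHeartbeats 1000000

noncomputable section
open MeasureTheory

lemma boost_apply (ℓ t : ℝ) (x : E4) (i : Fin 4) :
    boost ℓ t x i = if i = 0 then (x 0 - ℓ * t) / Real.sqrt (1 - ℓ ^ 2) else x i := rfl

lemma coord_abs_le (y : E4) (i : Fin 4) : |y i| ≤ ‖y‖ := by
  rw [EuclideanSpace.norm_eq, ← Real.sqrt_sq_eq_abs]
  apply Real.sqrt_le_sqrt
  have := Finset.single_le_sum (f := fun j => ‖y j‖ ^ 2)
    (fun j _ => by positivity) (Finset.mem_univ i)
  simpa [Real.norm_eq_abs, sq_abs] using this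

lemma continuous_boost (ℓ t : ℝ) : Continuous (boost ℓ t) := by
  have hco : ∀ i : Fin 4, Continuous fun x : E4 => x i := fun i =>
    (EuclideanSpace.proj (𝕜 := ℝ) i).continuous
  have h : Continuous fun x : E4 =>
      (fun i => if i = 0 then (x 0 - ℓ * t) / Real.sqrt (1 - ℓ ^ 2) else x i : Fin 4 → ℝ) := by
    apply continuous_pi
    intro i
    by_cases hi : i = 0
    · simpa [hi] using ((hco 0).sub continuous_const).div_const _
    · simpa [hi] using hco i
  exact (PiLp.continuous_toLp (p := 2) (β := fun _ : Fin 4 => ℝ)).comp h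

lemma norm_sub_le_norm_boost {ℓ : ℝ} (hℓ : ℓ ∈ Set.Ioo (-1 : ℝ) 1) (t : ℝ) (x : E4) :
    ‖x - (ℓ * t) • EuclideanSpace.single (0 : Fin 4) (1 : ℝ)‖ ≤ ‖boost ℓ t x‖ := by
  have h1 : (0:ℝ) < 1 - ℓ ^ 2 := by nlinarith [hℓ.1, hℓ.2]
  have hs : 0 < Real.sqrt (1 - ℓ ^ 2) := Real.sqrt_pos.2 h1
  have hs1 : Real.sqrt (1 - ℓ ^ 2) ≤ 1 := Real.sqrt_le_one.2 (by nlinarith)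
  rw [EuclideanSpace.norm_eq, EuclideanSpace.norm_eq]
  apply Real.sqrt_le_sqrt
  apply Finset.sum_le_sum
  intro i _
  by_cases hi : i = 0
  · subst hi
    have : (x - (ℓ * t) • EuclideanSpace.single (0 : Fin 4) (1 : ℝ)) 0 = x 0 - ℓ * t := by
      simp [PiLp.sub_apply, PiLp.smul_apply, EuclideanSpace.single_apply]
    rw [this, boost_apply]
    simp only [if_pos rfl, if_true, Real.norm_eq_abs, sq_abs, div_pow, ite_true]
    rw [le_div_iff₀ (by positivity)]
    nlinarith [sq_nonneg (x 0 - ℓ * t), Real.sq_sqrt h1.le, Real.sqrt_nonneg (1 - ℓ^2)]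
  · have : (x - (ℓ * t) • EuclideanSpace.single (0 : Fin 4) (1 : ℝ)) i = x i := by
      simp [PiLp.sub_apply, PiLp.smul_apply, EuclideanSpace.single_apply, hi]
    rw [this, boost_apply, if_neg hi]

lemma abs_coord0_le_norm_boost {ℓ : ℝ} (hℓ : ℓ ∈ Set.Ioo (-1 : ℝ) 1) (t : ℝ) (x : E4) :
    |x 0 - ℓ * t| ≤ ‖boost ℓ t x‖ := by
  have h1 : (0:ℝ) < 1 - ℓ ^ 2 := by nlinarith [hℓ.1, hℓ.2]
  have hs : 0 < Real.sqrt (1 - ℓ ^ 2) := Real.sqrt_pos.2 h1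
  have hs1 : Real.sqrt (1 - ℓ ^ 2) ≤ 1 := Real.sqrt_le_one.2 (by nlinarith)
  have h := coord_abs_le (boost ℓ t x) 0
  rw [boost_apply, if_pos rfl, abs_div, abs_of_pos hs] at h
  calc |x 0 - ℓ * t| ≤ |x 0 - ℓ * t| / Real.sqrt (1 - ℓ ^ 2) := by
        rw [le_div_iff₀ hs]; nlinarith [abs_nonneg (x 0 - ℓ * t)]
    _ ≤ _ := h

lemma abs_coord3_le_norm_boost (ℓ t : ℝ) (x : E4) : |x 3| ≤ ‖boost ℓ t x‖ := by
  have h := coord_abs_le (boost ℓ t x) 3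
  rwa [boost_apply, if_neg (by decide)] at h

lemma integrable_inv_pow (k : ℕ) (hk : 3 ≤ k) :
    Integrable (fun x : E4 => ((1 + ‖x‖ ^ 2) ^ k)⁻¹) := by
  have hk' : (3:ℝ) ≤ (k:ℝ) := by exact_mod_cast hk
  have hr : (Module.finrank ℝ E4 : ℝ) < (2 * k : ℝ) := by
    have h4 : Module.finrank ℝ E4 = 4 := by simp [finrank_euclideanSpace]
    rw [h4]; push_cast; linarith
  have h := integrable_rpow_neg_one_add_norm_sq (E := E4) (μ := volume) hr
  have heq : (fun x : E4 => ((1 + ‖x‖ ^ 2) ^ k)⁻¹)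
      = fun x : E4 => ((1 : ℝ) + ‖x‖ ^ 2) ^ (-(2 * (k:ℝ)) / 2) := by
    funext x
    have hpos : (0:ℝ) < 1 + ‖x‖ ^ 2 := by positivity
    rw [show -(2 * (k:ℝ)) / 2 = -(k:ℝ) by ring, Real.rpow_neg hpos.le, Real.rpow_natCast]
  rw [heq]; exact h

/-- Interaction of two boosted solitons with distinct collinear speeds:
`‖Q₁² Q₂‖_{L²} ≤ C' t⁻⁴`, using the refined asymptotics `Q(x) ≈ x₄/|x|⁴`. -/
theorem soliton_interaction_t4 (Q : E4 → ℝ) (hc : Continuous Q) (C : ℝ)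
    (h1 : ∀ x : E4, |Q x| ≤ C * Real.sqrt (1 + ‖x‖ ^ 2) ^ (-3 : ℤ))
    (h2 : ∀ x : E4, 1 < ‖x‖ → |Q x - x 3 / ‖x‖ ^ 4| ≤ C / ‖x‖ ^ 4)
    (ℓ₁ ℓ₂ : ℝ) (hℓ₁ : ℓ₁ ∈ Set.Ioo (-1 : ℝ) 1) (hℓ₂ : ℓ₂ ∈ Set.Ioo (-1 : ℝ) 1)
    (hne : ℓ₁ ≠ ℓ₂) :
    ∃ T0 > 0, ∃ C' > 0, ∀ t ≥ T0,
      Real.sqrt (∫ x : E4, (Q (boost ℓ₁ t x) ^ 2 * Q (boost ℓ₂ t x)) ^ 2)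
        ≤ C' * t ^ (-4 : ℤ) := by
  have hC0 : 0 ≤ C := by
    have h := h1 0
    simp at h
    exact (abs_nonneg (Q 0)).trans h
  -- pointwise decay bounds
  have hQ2 : ∀ y : E4, Q y ^ 2 ≤ C ^ 2 * ((1 + ‖y‖ ^ 2) ^ 3)⁻¹ := by
    intro y
    have hpos : (0:ℝ) < 1 + ‖y‖ ^ 2 := by positivity
    have hS : (0:ℝ) < Real.sqrt (1 + ‖y‖ ^ 2) := Real.sqrt_pos.2 hpos
    have h := h1 y
    have h3 : Real.sqrt (1 + ‖y‖ ^ 2) ^ (-3 : ℤ) = (Real.sqrt (1 + ‖y‖ ^ 2) ^ 3)⁻¹ := by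
      rw [zpow_neg, show ((3:ℤ)) = ((3:ℕ):ℤ) from rfl, zpow_natCast]
    rw [h3] at h
    have hsq : |Q y| ^ 2 ≤ (C * (Real.sqrt (1 + ‖y‖ ^ 2) ^ 3)⁻¹) ^ 2 :=
      pow_le_pow_left₀ (abs_nonneg _) h 2
    rw [sq_abs] at hsq
    calc Q y ^ 2 ≤ (C * (Real.sqrt (1 + ‖y‖ ^ 2) ^ 3)⁻¹) ^ 2 := hsq
      _ = C ^ 2 * (((Real.sqrt (1 + ‖y‖ ^ 2)) ^ 2) ^ 3)⁻¹ := by ring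
      _ = C ^ 2 * ((1 + ‖y‖ ^ 2) ^ 3)⁻¹ := by rw [Real.sq_sqrt hpos.le]
  have hQ4 : ∀ y : E4, Q y ^ 4 ≤ C ^ 4 * ((1 + ‖y‖ ^ 2) ^ 6)⁻¹ := by
    intro y
    have hpos : (0:ℝ) < 1 + ‖y‖ ^ 2 := by positivity
    have hne6 : ((1:ℝ) + ‖y‖ ^ 2) ≠ 0 := ne_of_gt hpos
    have h := pow_le_pow_left₀ (by positivity) (hQ2 y) 2
    calc Q y ^ 4 = (Q y ^ 2) ^ 2 := by ring
      _ ≤ (C ^ 2 * ((1 + ‖y‖ ^ 2) ^ 3)⁻¹) ^ 2 := h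
      _ = C ^ 4 * ((1 + ‖y‖ ^ 2) ^ 6)⁻¹ := by
          field_simp
  set δ := |ℓ₁ - ℓ₂| with hδdef
  have hδ : 0 < δ := abs_pos.2 (sub_ne_zero.2 hne)
  have hI5 : Integrable (fun x : E4 => ((1 + ‖x‖ ^ 2) ^ 5)⁻¹) := integrable_inv_pow 5 (by norm_num)
  have hI3 : Integrable (fun x : E4 => ((1 + ‖x‖ ^ 2) ^ 3)⁻¹) := integrable_inv_pow 3 le_rfl
  set K₁ : ℝ := C ^ 4 * (1 + C) ^ 2 with hK₁
  set K₂ : ℝ := C ^ 6 with hK₂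
  have hK₁0 : 0 ≤ K₁ := by positivity
  have hK₂0 : 0 ≤ K₂ := by positivity
  set I₅ : ℝ := ∫ x : E4, ((1 + ‖x‖ ^ 2) ^ 5)⁻¹ with hI₅def
  set I₃ : ℝ := ∫ x : E4, ((1 + ‖x‖ ^ 2) ^ 3)⁻¹ with hI₃def
  have hI₅0 : 0 ≤ I₅ := integral_nonneg fun x => by positivity
  have hI₃0 : 0 ≤ I₃ := integral_nonneg fun x => by positivity
  set M : ℝ := K₁ * I₅ + K₂ * I₃ with hM
  have hM0 : 0 ≤ M := by positivity
  refine ⟨max 1 (4 / δ), lt_of_lt_of_le one_pos (le_max_left _ _),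
    (2 / δ) ^ 4 * (Real.sqrt M + 1), by positivity, ?_⟩
  intro t ht
  have ht1 : (1:ℝ) ≤ t := le_trans (le_max_left _ _) ht
  have ht0 : (0:ℝ) < t := lt_of_lt_of_le one_pos ht1
  have htδ : 4 / δ ≤ t := le_trans (le_max_right _ _) ht
  set τ : ℝ := δ * t / 2 with hτdef
  have hτ2 : (2:ℝ) ≤ τ := by
    rw [hτdef]
    rw [div_le_iff₀ hδ] at htδ
    linarith
  have hτ0 : (0:ℝ) < τ := lt_of_lt_of_le two_pos hτ2
  have hτ1 : (1:ℝ) ≤ τ := by linarith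
  set v₁ : E4 := (ℓ₁ * t) • EuclideanSpace.single (0 : Fin 4) (1 : ℝ) with hv₁
  set v₂ : E4 := (ℓ₂ * t) • EuclideanSpace.single (0 : Fin 4) (1 : ℝ) with hv₂
  set G : E4 → ℝ := fun x =>
    K₁ * ((1 + ‖x - v₁‖ ^ 2) ^ 5)⁻¹ + K₂ * ((1 + ‖x - v₂‖ ^ 2) ^ 3)⁻¹ with hG
  have hGint : Integrable G :=
    ((hI5.comp_sub_right v₁).const_mul K₁).add ((hI3.comp_sub_right v₂).const_mul K₂)
  -- the pointwise bound
  have hFG : ∀ x : E4, (Q (boost ℓ₁ t x) ^ 2 * Q (boost ℓ₂ t x)) ^ 2 ≤ (τ ^ 8)⁻¹ * G x := by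
    intro x
    set y₁ : E4 := boost ℓ₁ t x with hy₁
    set y₂ : E4 := boost ℓ₂ t x with hy₂
    have hn₁pos : (0:ℝ) < 1 + ‖y₁‖ ^ 2 := by positivity
    have hn₂pos : (0:ℝ) < 1 + ‖y₂‖ ^ 2 := by positivity
    have hm₁pos : (0:ℝ) < 1 + ‖x - v₁‖ ^ 2 := by positivity
    have hm₂pos : (0:ℝ) < 1 + ‖x - v₂‖ ^ 2 := by positivity
    have hm₁ : 1 + ‖x - v₁‖ ^ 2 ≤ 1 + ‖y₁‖ ^ 2 := by
      have h := norm_sub_le_norm_boost hℓ₁ t x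
      nlinarith [norm_nonneg (x - v₁)]
    have hm₂ : 1 + ‖x - v₂‖ ^ 2 ≤ 1 + ‖y₂‖ ^ 2 := by
      have h := norm_sub_le_norm_boost hℓ₂ t x
      nlinarith [norm_nonneg (x - v₂)]
    have hb₁ : |x 0 - ℓ₁ * t| ≤ ‖y₁‖ := abs_coord0_le_norm_boost hℓ₁ t x
    have hb₂ : |x 0 - ℓ₂ * t| ≤ ‖y₂‖ := abs_coord0_le_norm_boost hℓ₂ t x
    have hy₂3 : y₂ 3 = x 3 := by rw [hy₂, boost_apply, if_neg (by decide)]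
    have hx3 : |x 3| ≤ ‖y₁‖ := abs_coord3_le_norm_boost ℓ₁ t x
    clear_value y₁ y₂ v₁ v₂
    by_cases hA : |x 0 - ℓ₁ * t| ≤ τ
    · -- near the first soliton : use the refined asymptotics for Q y₂
      have hsep : τ ≤ |x 0 - ℓ₂ * t| := by
        have habs : |(ℓ₁ - ℓ₂) * t| = δ * t := by
          rw [abs_mul, abs_of_pos ht0, hδdef]
        have htriangle : |(ℓ₁ - ℓ₂) * t| ≤ |x 0 - ℓ₂ * t| + |x 0 - ℓ₁ * t| := by
          have h : (ℓ₁ - ℓ₂) * t = (x 0 - ℓ₂ * t) - (x 0 - ℓ₁ * t) := by ring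
          rw [h]
          exact abs_sub _ _
        rw [habs] at htriangle
        have h2τ : δ * t = 2 * τ := by rw [hτdef]; ring
        linarith
      have hny₂ : τ ≤ ‖y₂‖ := le_trans hsep hb₂
      have hy₂1 : 1 < ‖y₂‖ := lt_of_lt_of_le (by linarith) hny₂
      have hy₂0 : (0:ℝ) < ‖y₂‖ := lt_trans one_pos hy₂1
      have hh2 := h2 y₂ hy₂1
      have hQy₂ : |Q y₂| ≤ (‖y₁‖ + C) / τ ^ 4 := by
        have h4pos : (0:ℝ) < ‖y₂‖ ^ 4 := by positivity
        have hstep : |Q y₂| ≤ (|x 3| + C) / ‖y₂‖ ^ 4 := by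
          have htri := abs_sub_abs_le_abs_sub (Q y₂) (y₂ 3 / ‖y₂‖ ^ 4)
          have habsdiv : |y₂ 3 / ‖y₂‖ ^ 4| = |x 3| / ‖y₂‖ ^ 4 := by
            rw [abs_div, abs_of_pos h4pos, hy₂3]
          rw [add_div]
          linarith [habsdiv ▸ htri, hh2]
        refine hstep.trans ?_
        apply div_le_div₀ (by positivity) (by linarith [hx3]) (by positivity)
        exact pow_le_pow_left₀ hτ0.le hny₂ 4
      have hQy₂sq : Q y₂ ^ 2 ≤ (1 + C) ^ 2 * (1 + ‖y₁‖ ^ 2) / τ ^ 8 := by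
        have h := pow_le_pow_left₀ (abs_nonneg _) hQy₂ 2
        rw [sq_abs] at h
        refine h.trans ?_
        rw [div_pow, show (τ ^ 4) ^ 2 = τ ^ 8 by ring]
        have hnum : (‖y₁‖ + C) ^ 2 ≤ (1 + C) ^ 2 * (1 + ‖y₁‖ ^ 2) := by
          nlinarith [norm_nonneg y₁, mul_nonneg hC0 (sq_nonneg (‖y₁‖ - 1)),
            mul_nonneg hC0 (norm_nonneg y₁), sq_nonneg (C * ‖y₁‖),
            mul_nonneg hC0 (mul_nonneg (norm_nonneg y₁) (norm_nonneg y₁))]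
        exact div_le_div₀ (by positivity) hnum (by positivity) le_rfl
      have hkey : (Q y₁ ^ 2 * Q y₂) ^ 2
          ≤ (C ^ 4 * ((1 + ‖y₁‖ ^ 2) ^ 6)⁻¹) * ((1 + C) ^ 2 * (1 + ‖y₁‖ ^ 2) / τ ^ 8) := by
        have e : (Q y₁ ^ 2 * Q y₂) ^ 2 = Q y₁ ^ 4 * Q y₂ ^ 2 := by ring
        rw [e]
        exact mul_le_mul (hQ4 y₁) hQy₂sq (by positivity) (by positivity)
      refine hkey.trans ?_
      have e2 : (C ^ 4 * ((1 + ‖y₁‖ ^ 2) ^ 6)⁻¹) * ((1 + C) ^ 2 * (1 + ‖y₁‖ ^ 2) / τ ^ 8)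
          = (τ ^ 8)⁻¹ * (K₁ * ((1 + ‖y₁‖ ^ 2) ^ 5)⁻¹) := by
        rw [hK₁]
        field_simp
      rw [e2]
      have hstep2 : K₁ * ((1 + ‖y₁‖ ^ 2) ^ 5)⁻¹ ≤ G x := by
        rw [hG]
        have h5 : ((1 + ‖y₁‖ ^ 2) ^ 5)⁻¹ ≤ ((1 + ‖x - v₁‖ ^ 2) ^ 5)⁻¹ := by
          apply inv_anti₀ (by positivity)
          exact pow_le_pow_left₀ hm₁pos.le hm₁ 5
        calc K₁ * ((1 + ‖y₁‖ ^ 2) ^ 5)⁻¹ ≤ K₁ * ((1 + ‖x - v₁‖ ^ 2) ^ 5)⁻¹ :=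
              mul_le_mul_of_nonneg_left h5 hK₁0
          _ ≤ _ := le_add_of_nonneg_right (by positivity)
      exact mul_le_mul_of_nonneg_left hstep2 (by positivity)
    · -- far from the first soliton : crude bounds suffice
      push_neg at hA
      have hny₁ : τ ≤ ‖y₁‖ := le_trans hA.le hb₁
      have hQy₁4 : Q y₁ ^ 4 ≤ C ^ 4 * (τ ^ 8)⁻¹ := by
        refine (hQ4 y₁).trans ?_
        apply mul_le_mul_of_nonneg_left _ (by positivity)
        apply inv_anti₀ (by positivity)
        calc τ ^ 8 ≤ τ ^ 12 := by
              apply pow_le_pow_right₀ hτ1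
              norm_num
          _ = (τ ^ 2) ^ 6 := by ring
          _ ≤ (1 + ‖y₁‖ ^ 2) ^ 6 := by
              apply pow_le_pow_left₀ (by positivity)
              nlinarith
      have hQy₂2 : Q y₂ ^ 2 ≤ C ^ 2 * ((1 + ‖x - v₂‖ ^ 2) ^ 3)⁻¹ := by
        refine (hQ2 y₂).trans ?_
        apply mul_le_mul_of_nonneg_left _ (by positivity)
        apply inv_anti₀ (by positivity)
        exact pow_le_pow_left₀ hm₂pos.le hm₂ 3
      have hkey : (Q y₁ ^ 2 * Q y₂) ^ 2
          ≤ (C ^ 4 * (τ ^ 8)⁻¹) * (C ^ 2 * ((1 + ‖x - v₂‖ ^ 2) ^ 3)⁻¹) := by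
        have e : (Q y₁ ^ 2 * Q y₂) ^ 2 = Q y₁ ^ 4 * Q y₂ ^ 2 := by ring
        rw [e]
        exact mul_le_mul hQy₁4 hQy₂2 (by positivity) (by positivity)
      refine hkey.trans ?_
      have e2 : (C ^ 4 * (τ ^ 8)⁻¹) * (C ^ 2 * ((1 + ‖x - v₂‖ ^ 2) ^ 3)⁻¹)
          = (τ ^ 8)⁻¹ * (K₂ * ((1 + ‖x - v₂‖ ^ 2) ^ 3)⁻¹) := by
        rw [hK₂]; ring
      rw [e2]
      have hstep2 : K₂ * ((1 + ‖x - v₂‖ ^ 2) ^ 3)⁻¹ ≤ G x := by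
        rw [hG]
        exact le_add_of_nonneg_left (by positivity)
      exact mul_le_mul_of_nonneg_left hstep2 (by positivity)
  -- integrate the pointwise bound
  have hFc : Continuous fun x : E4 => (Q (boost ℓ₁ t x) ^ 2 * Q (boost ℓ₂ t x)) ^ 2 :=
    (((hc.comp (continuous_boost ℓ₁ t)).pow 2).mul (hc.comp (continuous_boost ℓ₂ t))).pow 2
  have hGint' : Integrable (fun x : E4 => (τ ^ 8)⁻¹ * G x) := hGint.const_mul _
  have hFint : Integrable (fun x : E4 => (Q (boost ℓ₁ t x) ^ 2 * Q (boost ℓ₂ t x)) ^ 2) := by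
    refine hGint'.mono' hFc.aestronglyMeasurable (Filter.Eventually.of_forall fun x => ?_)
    rw [Real.norm_eq_abs, abs_of_nonneg (by positivity)]
    exact hFG x
  have hintle : (∫ x : E4, (Q (boost ℓ₁ t x) ^ 2 * Q (boost ℓ₂ t x)) ^ 2)
      ≤ ∫ x : E4, (τ ^ 8)⁻¹ * G x := integral_mono hFint hGint' hFG
  have hGval : (∫ x : E4, (τ ^ 8)⁻¹ * G x) = (τ ^ 8)⁻¹ * M := by
    rw [integral_const_mul]
    congr 1
    rw [hG, hM]
    rw [integral_add ((hI5.comp_sub_right v₁).const_mul K₁) ((hI3.comp_sub_right v₂).const_mul K₂)]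
    rw [integral_const_mul, integral_const_mul]
    rw [hI₅def, hI₃def]
    rw [integral_sub_right_eq_self (fun y : E4 => ((1 + ‖y‖ ^ 2) ^ 5)⁻¹) v₁,
      integral_sub_right_eq_self (fun y : E4 => ((1 + ‖y‖ ^ 2) ^ 3)⁻¹) v₂]
  -- conclude with the square root
  have hsq : Real.sqrt (∫ x : E4, (Q (boost ℓ₁ t x) ^ 2 * Q (boost ℓ₂ t x)) ^ 2)
      ≤ Real.sqrt ((τ ^ 8)⁻¹ * M) := by
    apply Real.sqrt_le_sqrt
    rw [← hGval]
    exact hintle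
  refine hsq.trans ?_
  have hτ8 : ((τ ^ 8)⁻¹ : ℝ) = ((τ ^ 4)⁻¹) ^ 2 := by ring
  rw [hτ8, Real.sqrt_mul (sq_nonneg _), Real.sqrt_sq (by positivity)]
  have hτ4 : (τ ^ 4)⁻¹ = (2 / δ) ^ 4 * (t ^ 4)⁻¹ := by
    rw [hτdef]
    field_simp
  rw [hτ4, show (t : ℝ) ^ (-4 : ℤ) = (t ^ 4)⁻¹ by rw [zpow_neg, show ((4:ℤ)) = ((4:ℕ):ℤ) from rfl, zpow_natCast]]
  have : (2 / δ) ^ 4 * (t ^ 4)⁻¹ * Real.sqrt M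
      = ((2 / δ) ^ 4 * Real.sqrt M) * (t ^ 4)⁻¹ := by ring
  rw [this]
  apply mul_le_mul_of_nonneg_right _ (by positivity)
  apply mul_le_mul_of_nonneg_left (by linarith) (by positivity)
end
end
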